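/- arXiv:2504.19741 — 11 statements merged into one kernel-verified Lean document; each statement's English description precedes it below -/
import Mathlib

section
/- The function h : [0,∞) → ℝ defined by h(c) = 2∫₀^c e^{t²/2} dt − c·e^{c²/2} has exactly one root in (0,∞); moreover this unique positive root lies in the open interval (1,2). -/
open Real

/-- The function `h(c) = 2∫₀^c e^{t²/2} dt − c·e^{c²/2}` has exactly one root in `(0,∞)`,
and this unique positive root lies in `(1,2)`. -/
theorem stmt_0 (h : ℝ → ℝ)
    (hh : ∀ c : ℝ, h c = 2 * (∫ t in (0:ℝ)..c, Real.exp (t ^ 2 / 2)) - c * Real.exp (c ^ 2 / 2)) :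
    ∃ C : ℝ, 0 < C ∧ h C = 0 ∧ (∀ c : ℝ, 0 < c → h c = 0 → c = C) ∧ 1 < C ∧ C < 2 := by
  have hfun : h = fun c => 2 * (∫ t in (0:ℝ)..c, Real.exp (t ^ 2 / 2)) -
      c * Real.exp (c ^ 2 / 2) := funext hh
  subst hfun
  have hcont : Continuous fun t : ℝ => Real.exp (t ^ 2 / 2) := by
    fun_prop
  -- derivative of h
  have hd : ∀ c : ℝ, HasDerivAt
      (fun c => 2 * (∫ t in (0:ℝ)..c, Real.exp (t ^ 2 / 2)) - c * Real.exp (c ^ 2 / 2))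
      ((1 - c ^ 2) * Real.exp (c ^ 2 / 2)) c := by
    intro c
    have hF : HasDerivAt (fun c => ∫ t in (0:ℝ)..c, Real.exp (t ^ 2 / 2))
        (Real.exp (c ^ 2 / 2)) c :=
      (hcont.integral_hasStrictDerivAt 0 c).hasDerivAt
    have hq : HasDerivAt (fun c : ℝ => c ^ 2 / 2) c c := by
      simpa using (hasDerivAt_pow 2 c).div_const 2
    have he : HasDerivAt (fun c : ℝ => Real.exp (c ^ 2 / 2))
        (Real.exp (c ^ 2 / 2) * c) c := hq.exp
    have hprod := (hasDerivAt_id c).mul he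
    have := (hF.const_mul 2).sub hprod
    refine this.congr_deriv ?_
    simp only [id_eq]
    ring
  have hC : Continuous fun c : ℝ =>
      2 * (∫ t in (0:ℝ)..c, Real.exp (t ^ 2 / 2)) - c * Real.exp (c ^ 2 / 2) :=
    continuous_iff_continuousAt.2 fun x => (hd x).continuousAt
  set g : ℝ → ℝ := fun c =>
    2 * (∫ t in (0:ℝ)..c, Real.exp (t ^ 2 / 2)) - c * Real.exp (c ^ 2 / 2) with hg
  -- h 0 = 0
  have h0 : g 0 = 0 := by simp [hg]
  -- strict mono on [0,1]
  have hmono : StrictMonoOn g (Set.Icc 0 1) := by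
    apply strictMonoOn_of_deriv_pos (convex_Icc 0 1) hC.continuousOn
    intro x hx
    rw [interior_Icc] at hx
    rw [(hd x).deriv]
    have h1 : 0 < 1 - x ^ 2 := by nlinarith [hx.1, hx.2]
    exact mul_pos h1 (Real.exp_pos _)
  -- strict anti on [1,∞)
  have hanti : StrictAntiOn g (Set.Ici 1) := by
    apply strictAntiOn_of_deriv_neg (convex_Ici 1) hC.continuousOn
    intro x hx
    rw [interior_Ici] at hx
    rw [(hd x).deriv]
    have hx1 : (1:ℝ) < x := hx
    have h1 : 1 - x ^ 2 < 0 := by nlinarith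
    exact mul_neg_of_neg_of_pos h1 (Real.exp_pos _)
  -- g 1 > 0
  have h1pos : 0 < g 1 := by
    have hint : (1:ℝ) ≤ ∫ t in (0:ℝ)..1, Real.exp (t ^ 2 / 2) := by
      have : (∫ t in (0:ℝ)..1, (1:ℝ)) ≤ ∫ t in (0:ℝ)..1, Real.exp (t ^ 2 / 2) := by
        apply intervalIntegral.integral_mono_on (by norm_num) (by simp)
          (hcont.intervalIntegrable 0 1)
        intro x _
        have : (0:ℝ) ≤ x ^ 2 / 2 := by positivity
        linarith [Real.one_le_exp this]
      simpa using this
    have hsq : Real.exp ((1:ℝ) ^ 2 / 2) * Real.exp ((1:ℝ) ^ 2 / 2) = Real.exp 1 := by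
      rw [← Real.exp_add]; norm_num
    have hlt : Real.exp ((1:ℝ) ^ 2 / 2) < 2 := by
      nlinarith [Real.exp_pos ((1:ℝ) ^ 2 / 2), Real.exp_one_lt_d9]
    simp only [hg]
    nlinarith
  -- g 2 < 0
  have h2neg : g 2 < 0 := by
    have hint : (∫ t in (0:ℝ)..2, Real.exp (t ^ 2 / 2)) ≤ Real.exp 2 - 1 := by
      have hle : (∫ t in (0:ℝ)..2, Real.exp (t ^ 2 / 2)) ≤ ∫ t in (0:ℝ)..2, Real.exp t := by
        apply intervalIntegral.integral_mono_on (by norm_num)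
          (hcont.intervalIntegrable 0 2)
          (Real.continuous_exp.intervalIntegrable 0 2)
        intro x hx
        apply Real.exp_le_exp.2
        nlinarith [hx.1, hx.2]
      have : (∫ t in (0:ℝ)..2, Real.exp t) = Real.exp 2 - 1 := by
        rw [integral_exp]; simp
      linarith
    have h22 : ((2:ℝ) ^ 2 / 2) = 2 := by norm_num
    simp only [hg, h22]
    nlinarith
  -- IVT on [1,2]
  have hivt : (0:ℝ) ∈ g '' Set.Ioo 1 2 := by
    apply intermediate_value_Ioo' (by norm_num) hC.continuousOn
    exact ⟨h2neg, h1pos⟩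
  obtain ⟨C, ⟨hC1, hC2⟩, hCz⟩ := hivt
  refine ⟨C, by linarith, hCz, ?_, hC1, hC2⟩
  intro c hc hcz
  have hc1 : 1 < c := by
    by_contra hle
    push_neg at hle
    have := hmono (Set.mem_Icc.2 ⟨le_refl 0, by norm_num⟩) (Set.mem_Icc.2 ⟨hc.le, hle⟩) hc
    rw [h0, hcz] at this
    exact lt_irrefl 0 this
  exact hanti.injOn (Set.mem_Ici.2 hc1.le) (Set.mem_Ici.2 hC1.le) (by rw [hcz, hCz])
end

section
/- For every y > 0, the strict inequality (y(2 − y²)/2)·e^{y²/2} < ∫₀^y e^{t²/2} dt holds. -/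
open Real

/-- For every `y > 0`, `(y(2 − y²)/2)·e^{y²/2} < ∫₀^y e^{t²/2} dt`. -/
theorem stmt_2 :
    ∀ y : ℝ, 0 < y →
      y * (2 - y ^ 2) / 2 * Real.exp (y ^ 2 / 2) < ∫ t in (0:ℝ)..y, Real.exp (t ^ 2 / 2) := by
  intro y hy
  set G : ℝ → ℝ := fun t => t * (2 - t ^ 2) / 2 * Real.exp (t ^ 2 / 2) with hGdef
  have hderiv : ∀ t : ℝ, HasDerivAt G (Real.exp (t ^ 2 / 2) * ((2 - t ^ 2 - t ^ 4) / 2)) t := by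
    intro t
    have h1 : HasDerivAt (fun t : ℝ => t * (2 - t ^ 2) / 2) ((2 - 3 * t ^ 2) / 2) t := by
      have := ((hasDerivAt_id t).mul ((hasDerivAt_const t (2:ℝ)).sub (hasDerivAt_pow 2 t))).div_const 2
      refine this.congr_deriv ?_
      simp; ring
    have h2 : HasDerivAt (fun t : ℝ => Real.exp (t ^ 2 / 2)) (t * Real.exp (t ^ 2 / 2)) t := by
      have hp : HasDerivAt (fun t : ℝ => t ^ 2 / 2) t t := by
        have := (hasDerivAt_pow 2 t).div_const 2
        refine this.congr_deriv ?_
        simp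
      have := hp.exp
      convert this using 1
      ring
    have := h1.mul h2
    have heq : G = fun t : ℝ => t * (2 - t ^ 2) / 2 * Real.exp (t ^ 2 / 2) := hGdef
    rw [heq]
    refine this.congr_deriv ?_
    ring
  have hcont : Continuous fun t : ℝ => Real.exp (t ^ 2 / 2) * ((2 - t ^ 2 - t ^ 4) / 2) := by
    continuity
  have hcont2 : Continuous fun t : ℝ => Real.exp (t ^ 2 / 2) * ((t ^ 2 + t ^ 4) / 2) := by
    continuity
  have hint : (∫ t in (0:ℝ)..y, Real.exp (t ^ 2 / 2) * ((2 - t ^ 2 - t ^ 4) / 2)) = G y - G 0 :=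
    intervalIntegral.integral_eq_sub_of_hasDerivAt (fun t _ => hderiv t)
      (hcont.intervalIntegrable 0 y)
  have hG0 : G 0 = 0 := by simp [hGdef]
  have hpos : 0 < ∫ t in (0:ℝ)..y, Real.exp (t ^ 2 / 2) * ((t ^ 2 + t ^ 4) / 2) := by
    apply intervalIntegral.intervalIntegral_pos_of_pos_on (hcont2.intervalIntegrable 0 y) _ hy
    intro x hx
    have hx0 : 0 < x := hx.1
    have he := Real.exp_pos (x ^ 2 / 2)
    nlinarith [pow_pos hx0 2, pow_pos hx0 4]
  have hsplit : (∫ t in (0:ℝ)..y, Real.exp (t ^ 2 / 2))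
      = (∫ t in (0:ℝ)..y, Real.exp (t ^ 2 / 2) * ((2 - t ^ 2 - t ^ 4) / 2))
        + ∫ t in (0:ℝ)..y, Real.exp (t ^ 2 / 2) * ((t ^ 2 + t ^ 4) / 2) := by
    rw [← intervalIntegral.integral_add (hcont.intervalIntegrable 0 y)
      (hcont2.intervalIntegrable 0 y)]
    congr 1
    ext t
    ring
  have hfin : G y < ∫ t in (0:ℝ)..y, Real.exp (t ^ 2 / 2) := by
    rw [hsplit, hint, hG0]
    linarith
  simpa [hGdef] using hfin
end

section
/- Let C be the unique root in (0,∞) of h(c) = 2∫₀^c e^{t²/2} dt − c·e^{c²/2}. Then the function f : (0,∞) → ℝ defined by f(y) = (1/y)∫₀^y e^{t²/2} dt satisfies f''(y) > 0 for all y ∈ (0,C]; in particular f is strictly convex on (0,C]. -/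
open Real

noncomputable def Faux : ℝ → ℝ := fun y => ∫ t in (0:ℝ)..y, Real.exp (t ^ 2 / 2)

lemma contE : Continuous (fun t : ℝ => Real.exp (t ^ 2 / 2)) := by continuity

lemma hasDerivF (y : ℝ) : HasDerivAt Faux (Real.exp (y ^ 2 / 2)) y :=
  (contE.integral_hasStrictDerivAt 0 y).hasDerivAt

lemma hasDerivE (y : ℝ) : HasDerivAt (fun t : ℝ => Real.exp (t ^ 2 / 2))
    (Real.exp (y ^ 2 / 2) * y) y := by
  have h1 : HasDerivAt (fun t : ℝ => t ^ 2 / 2) y y := by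
    have := (hasDerivAt_pow 2 y).div_const 2
    exact this.congr_deriv (by ring)
  have := (Real.hasDerivAt_exp (y ^ 2 / 2)).comp y h1
  exact this

noncomputable def gaux : ℝ → ℝ := fun y => (y ^ 3 - 2 * y) * Real.exp (y ^ 2 / 2) + 2 * Faux y

lemma hasDerivG (y : ℝ) : HasDerivAt gaux (y ^ 2 * (y ^ 2 + 1) * Real.exp (y ^ 2 / 2)) y := by
  have h1 : HasDerivAt (fun y : ℝ => y ^ 3 - 2 * y) (3 * y ^ 2 - 2) y := by
    have := (hasDerivAt_pow 3 y).sub ((hasDerivAt_id y).const_mul 2)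
    exact this.congr_deriv (by ring)
  have h2 := (h1.mul (hasDerivE y)).add ((hasDerivF y).const_mul 2)
  exact h2.congr_deriv (by ring)

lemma gpos {y : ℝ} (hy : 0 < y) : 0 < gaux y := by
  have hc : ContinuousOn gaux (Set.Ici 0) := fun x _ =>
    (hasDerivG x).continuousAt.continuousWithinAt
  have hmono : StrictMonoOn gaux (Set.Ici (0:ℝ)) := by
    apply strictMonoOn_of_deriv_pos (convex_Ici 0) hc
    intro x hx
    rw [interior_Ici] at hx
    rw [(hasDerivG x).deriv]
    have hx' : (0:ℝ) < x := hx
    positivity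
  have h0 : gaux 0 = 0 := by simp [gaux, Faux]
  have := hmono Set.self_mem_Ici (Set.mem_Ici.mpr hy.le) hy
  rwa [h0] at this

/-- Let `C` be the unique positive root of `h(c) = 2∫₀^c e^{t²/2} dt − c·e^{c²/2}`.
Then `f(y) = (1/y)∫₀^y e^{t²/2} dt` satisfies `f''(y) > 0` on `(0,C]`; in particular `f`
is strictly convex on `(0,C]`. -/
theorem stmt_3 (C : ℝ) (hCpos : 0 < C)
    (hCroot : 2 * (∫ t in (0:ℝ)..C, Real.exp (t ^ 2 / 2)) - C * Real.exp (C ^ 2 / 2) = 0)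
    (hCuniq : ∀ c : ℝ, 0 < c →
      2 * (∫ t in (0:ℝ)..c, Real.exp (t ^ 2 / 2)) - c * Real.exp (c ^ 2 / 2) = 0 → c = C)
    (f : ℝ → ℝ)
    (hf : ∀ y : ℝ, f y = (1 / y) * ∫ t in (0:ℝ)..y, Real.exp (t ^ 2 / 2)) :
    (∀ y ∈ Set.Ioc (0:ℝ) C, 0 < deriv (deriv f) y) ∧
      StrictConvexOn ℝ (Set.Ioc (0:ℝ) C) f := by
  have hfeq : f = fun y => Faux y / y := by
    funext y
    rw [hf y]
    simp [Faux, one_div, inv_mul_eq_div]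
  rw [hfeq]
  set φ : ℝ → ℝ := fun y => (y * Real.exp (y ^ 2 / 2) - Faux y) / y ^ 2 with hφ
  have hderiv1 : ∀ y : ℝ, y ≠ 0 → HasDerivAt (fun y => Faux y / y) (φ y) y := by
    intro y hy
    have h := (hasDerivF y).div (hasDerivAt_id y) hy
    exact h.congr_deriv (by simp only [hφ, id_eq, mul_one]; ring)
  have hderivf : ∀ y : ℝ, y ≠ 0 → deriv (fun y => Faux y / y) y = φ y :=
    fun y hy => (hderiv1 y hy).deriv
  have hderiv2 : ∀ y : ℝ, y ≠ 0 → HasDerivAt φ (gaux y / y ^ 3) y := by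
    intro y hy
    have hn : HasDerivAt (fun y : ℝ => y * Real.exp (y ^ 2 / 2) - Faux y)
        (y ^ 2 * Real.exp (y ^ 2 / 2)) y := by
      have := ((hasDerivAt_id y).mul (hasDerivE y)).sub (hasDerivF y)
      exact this.congr_deriv (by simp only [id_eq]; ring)
    have hd : HasDerivAt (fun y : ℝ => y ^ 2) (2 * y) y := by
      simpa using hasDerivAt_pow 2 y
    have h := hn.div hd (pow_ne_zero 2 hy)
    exact h.congr_deriv (by
      simp only [gaux]
      rw [div_eq_div_iff (pow_ne_zero 2 (pow_ne_zero 2 hy)) (pow_ne_zero 3 hy)]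
      ring)
  have hdd : ∀ y : ℝ, 0 < y →
      deriv (deriv (fun y => Faux y / y)) y = gaux y / y ^ 3 := by
    intro y hy
    have hev : deriv (fun y => Faux y / y) =ᶠ[nhds y] φ := by
      filter_upwards [eventually_ne_nhds hy.ne'] with x hx using hderivf x hx
    rw [hev.deriv_eq, (hderiv2 y hy.ne').deriv]
  have hpos : ∀ y ∈ Set.Ioc (0:ℝ) C, 0 < deriv (deriv (fun y => Faux y / y)) y := by
    intro y hy
    rw [hdd y hy.1]
    exact div_pos (gpos hy.1) (pow_pos hy.1 3)
  refine ⟨hpos, ?_⟩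
  apply strictConvexOn_of_deriv2_pos (convex_Ioc 0 C)
  · exact ContinuousOn.div (fun x _ => (hasDerivF x).continuousAt.continuousWithinAt)
      continuousOn_id (fun x hx => ne_of_gt hx.1)
  · intro x hx
    rw [interior_Ioc] at hx
    have := hpos x ⟨hx.1, hx.2.le⟩
    simpa [Function.iterate_succ, Function.comp] using this
end

section
/- Let (a_j)_{j≥0} and (b_j)_{j≥0} be real sequences with a_j > 0 for all j, b_{j+1} ≥ b_j for all j, b_0 < 0, and b_J > 0 for some J < ∞. Suppose the power series h(y) = Σ_{j=0}^∞ a_j·b_j·y^j converges for every y ≥ 0. Then h has a unique root y* in (0,∞), and for y ≥ 0 one has h(y) < 0 if and only if y ∈ [0, y*). -/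
open Real Filter Set

private lemma aux10_abs (c : ℕ → ℝ)
    (hs : ∀ y : ℝ, 0 ≤ y → Summable (fun j : ℕ => c j * y ^ j)) (y : ℝ) :
    Summable (fun j : ℕ => |c j| * |y| ^ j) := by
  set Z : ℝ := 2 * |y| + 2 with hZdef
  have hZ0 : 0 < Z := by positivity
  have h1 : Tendsto (fun j : ℕ => c j * Z ^ j) atTop (nhds 0) :=
    (hs Z hZ0.le).tendsto_atTop_zero
  have h2 : Tendsto (fun j : ℕ => |c j| * Z ^ j) atTop (nhds 0) := by
    have := h1.abs
    simpa [abs_mul, abs_of_nonneg (pow_nonneg hZ0.le _)] using this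
  obtain ⟨C, hC⟩ := h2.bddAbove_range
  have hCb : ∀ j, |c j| * Z ^ j ≤ C := fun j => hC (Set.mem_range_self j)
  set r : ℝ := |y| / Z with hrdef
  have hr0 : 0 ≤ r := div_nonneg (abs_nonneg _) hZ0.le
  have hr1 : r < 1 := by
    rw [hrdef, div_lt_one hZ0, hZdef]; linarith [abs_nonneg y]
  have hyZr : |y| = Z * r := by rw [hrdef, mul_div_assoc', mul_div_cancel_left₀ _ hZ0.ne']
  refine Summable.of_nonneg_of_le (fun j => by positivity) (fun j => ?_)
    ((summable_geometric_of_lt_one hr0 hr1).mul_left C)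
  calc |c j| * |y| ^ j = (|c j| * Z ^ j) * r ^ j := by rw [hyZr, mul_pow]; ring
    _ ≤ C * r ^ j := mul_le_mul_of_nonneg_right (hCb j) (pow_nonneg hr0 j)

private lemma aux10_summable (c : ℕ → ℝ)
    (hs : ∀ y : ℝ, 0 ≤ y → Summable (fun j : ℕ => c j * y ^ j)) (y : ℝ) :
    Summable (fun j : ℕ => c j * y ^ j) := by
  apply Summable.of_norm
  simpa [abs_mul, abs_pow] using aux10_abs c hs y

private lemma aux10_cont (c : ℕ → ℝ)
    (hs : ∀ y : ℝ, 0 ≤ y → Summable (fun j : ℕ => c j * y ^ j))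
    (Y : ℝ) (hY : 0 ≤ Y) :
    ContinuousOn (fun y : ℝ => ∑' j : ℕ, c j * y ^ j) (Icc (-Y) Y) := by
  rw [continuousOn_iff_continuous_restrict]
  refine continuous_tsum (u := fun j => |c j| * Y ^ j)
    (f := fun j (x : Icc (-Y) Y) => c j * (x : ℝ) ^ j)
    (fun j => by fun_prop) ?_ ?_
  · simpa [abs_of_nonneg hY] using aux10_abs c hs Y
  · rintro j ⟨x, hx⟩
    have hxY : |x| ≤ Y := abs_le.mpr ⟨hx.1, hx.2⟩
    have hnorm : ‖c j * x ^ j‖ = |c j| * |x| ^ j := by rw [norm_mul, norm_pow]; rfl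
    rw [hnorm]
    exact mul_le_mul_of_nonneg_left (pow_le_pow_left₀ (abs_nonneg x) hxY j) (abs_nonneg _)

private lemma aux10_big (c : ℕ → ℝ) (m : ℕ) (y2 : ℝ)
    (hsm : Summable (fun j : ℕ => c j * y2 ^ j))
    (hnonneg : ∀ j, m ≤ j → 0 ≤ c j)
    (hy21 : 1 ≤ y2)
    (hy2c : (∑ j ∈ Finset.range m, |c j|) + 1 ≤ c (m + 1) * y2) :
    0 < ∑' j : ℕ, c j * y2 ^ j := by
  have hy20 : 0 < y2 := lt_of_lt_of_le zero_lt_one hy21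
  rw [← Summable.sum_add_tsum_nat_add m hsm]
  have hsm2 : Summable (fun i : ℕ => c (i + m) * y2 ^ (i + m)) :=
    (summable_nat_add_iff (f := fun j : ℕ => c j * y2 ^ j) m).mpr hsm
  have htail : c (m + 1) * y2 ^ (m + 1) ≤ ∑' i : ℕ, c (i + m) * y2 ^ (i + m) := by
    have := Summable.le_tsum hsm2 1
      (fun j _ => mul_nonneg (hnonneg (j + m) (Nat.le_add_left m j))
        (pow_nonneg hy20.le _))
    simpa [Nat.add_comm 1 m] using this
  have hhead : -((∑ j ∈ Finset.range m, |c j|) * y2 ^ m)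
      ≤ ∑ j ∈ Finset.range m, c j * y2 ^ j := by
    rw [neg_le]
    calc -∑ j ∈ Finset.range m, c j * y2 ^ j
        = ∑ j ∈ Finset.range m, -(c j * y2 ^ j) := by rw [Finset.sum_neg_distrib]
      _ ≤ ∑ j ∈ Finset.range m, |c j| * y2 ^ m := by
          apply Finset.sum_le_sum
          intro j hj
          rw [Finset.mem_range] at hj
          have h1 : |c j * y2 ^ j| ≤ |c j| * y2 ^ m := by
            rw [abs_mul, abs_pow, abs_of_pos hy20]
            exact mul_le_mul_of_nonneg_left (pow_le_pow_right₀ hy21 hj.le) (abs_nonneg _)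
          linarith [neg_abs_le (c j * y2 ^ j)]
      _ = (∑ j ∈ Finset.range m, |c j|) * y2 ^ m := by rw [Finset.sum_mul]
  have hkey : 0 < c (m + 1) * y2 ^ (m + 1)
      - (∑ j ∈ Finset.range m, |c j|) * y2 ^ m := by
    have hK0 : 0 ≤ ∑ j ∈ Finset.range m, |c j| :=
      Finset.sum_nonneg (fun j _ => abs_nonneg _)
    have hpm : 0 < y2 ^ m := pow_pos hy20 m
    rw [pow_succ]
    nlinarith
  linarith

private lemma aux10_mono (c : ℕ → ℝ) (m : ℕ)
    (hs : ∀ y : ℝ, 0 ≤ y → Summable (fun j : ℕ => c j * y ^ j))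
    (hc0 : c 0 < 0) (hm1 : 1 ≤ m)
    (hcneg : ∀ j < m, c j ≤ 0) (hcpos : ∀ j, m ≤ j → 0 ≤ c j)
    (x z : ℝ) (hx : 0 < x) (hxz : x < z) :
    (∑' j : ℕ, c j * x ^ j) / x ^ m < (∑' j : ℕ, c j * z ^ j) / z ^ m := by
  have hz : 0 < z := lt_trans hx hxz
  rw [← tsum_div_const, ← tsum_div_const]
  refine Summable.tsum_lt_tsum (f := fun j => c j * x ^ j / x ^ m)
    (g := fun j => c j * z ^ j / z ^ m) (i := 0) (fun j => ?_) ?_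
    ((aux10_summable c hs x).div_const _) ((aux10_summable c hs z).div_const _)
  · rcases lt_or_ge j m with hj | hj
    · have hcj := hcneg j hj
      have hfrac : z ^ j / z ^ m ≤ x ^ j / x ^ m := by
        rw [div_le_div_iff₀ (pow_pos hz m) (pow_pos hx m)]
        obtain ⟨k, rfl⟩ := Nat.exists_eq_add_of_le hj.le
        rw [pow_add, pow_add]
        have hk : x ^ k ≤ z ^ k := pow_le_pow_left₀ hx.le hxz.le k
        calc z ^ j * (x ^ j * x ^ k) = (x ^ j * z ^ j) * x ^ k := by ring
          _ ≤ (x ^ j * z ^ j) * z ^ k :=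
              mul_le_mul_of_nonneg_left hk (by positivity)
          _ = x ^ j * (z ^ j * z ^ k) := by ring
      calc c j * x ^ j / x ^ m = c j * (x ^ j / x ^ m) := by ring
        _ ≤ c j * (z ^ j / z ^ m) := mul_le_mul_of_nonpos_left hfrac hcj
        _ = c j * z ^ j / z ^ m := by ring
    · have hcj := hcpos j hj
      have hfrac : x ^ j / x ^ m ≤ z ^ j / z ^ m := by
        rw [div_le_div_iff₀ (pow_pos hx m) (pow_pos hz m)]
        obtain ⟨k, rfl⟩ := Nat.exists_eq_add_of_le hj
        rw [pow_add, pow_add]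
        have hk : x ^ k ≤ z ^ k := pow_le_pow_left₀ hx.le hxz.le k
        calc x ^ m * x ^ k * z ^ m = (x ^ m * z ^ m) * x ^ k := by ring
          _ ≤ (x ^ m * z ^ m) * z ^ k :=
              mul_le_mul_of_nonneg_left hk (by positivity)
          _ = z ^ m * z ^ k * x ^ m := by ring
      calc c j * x ^ j / x ^ m = c j * (x ^ j / x ^ m) := by ring
        _ ≤ c j * (z ^ j / z ^ m) := mul_le_mul_of_nonneg_left hfrac hcj
        _ = c j * z ^ j / z ^ m := by ring
  · have hxm : x ^ m < z ^ m := pow_lt_pow_left₀ hxz hx.le (by omega)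
    have hxm0 : 0 < x ^ m := pow_pos hx m
    have hzm0 : 0 < z ^ m := pow_pos hz m
    simp only [pow_zero, mul_one]
    rw [div_lt_div_iff₀ hxm0 hzm0]
    exact mul_lt_mul_of_neg_left hxm hc0

/-- Let `(a_j)` and `(b_j)` be real sequences with `a_j > 0`, `b` nondecreasing, `b₀ < 0`
and `b_J > 0` for some `J`, and suppose the power series `h(y) = Σ a_j·b_j·y^j`
converges for every `y ≥ 0`. Then `h` has a unique root `y*` in `(0,∞)` and, for `y ≥ 0`,
`h(y) < 0` if and only if `y < y*`. -/
theorem stmt_10 (a b : ℕ → ℝ)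
    (ha : ∀ j, 0 < a j)
    (hb : ∀ j, b j ≤ b (j + 1))
    (hb0 : b 0 < 0)
    (hbJ : ∃ J : ℕ, 0 < b J)
    (hsum : ∀ y : ℝ, 0 ≤ y → Summable (fun j : ℕ => a j * b j * y ^ j))
    (h : ℝ → ℝ) (hh : ∀ y : ℝ, h y = ∑' j : ℕ, a j * b j * y ^ j) :
    ∃ ystar : ℝ, 0 < ystar ∧ h ystar = 0 ∧
      (∀ y : ℝ, 0 < y → h y = 0 → y = ystar) ∧
      ∀ y : ℝ, 0 ≤ y → (h y < 0 ↔ y < ystar) := by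
  have hbmono : Monotone b := monotone_nat_of_le_succ hb
  obtain ⟨m, hbm, hblt'⟩ : ∃ m : ℕ, 0 < b m ∧ ∀ j < m, ¬ 0 < b j :=
    ⟨Nat.find hbJ, Nat.find_spec hbJ, fun j hj => Nat.find_min hbJ hj⟩
  have hblt : ∀ j < m, b j ≤ 0 := fun j hj => le_of_not_gt (hblt' j hj)
  have hm1 : 1 ≤ m := by
    rcases Nat.eq_zero_or_pos m with h0 | h1
    · exfalso; rw [h0] at hbm; linarith
    · exact h1
  have hc0 : a 0 * b 0 < 0 := mul_neg_of_pos_of_neg (ha 0) hb0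
  have hcneg : ∀ j < m, a j * b j ≤ 0 := fun j hj =>
    mul_nonpos_of_nonneg_of_nonpos (ha j).le (hblt j hj)
  have hcpos : ∀ j, m ≤ j → 0 < a j * b j := fun j hj =>
    mul_pos (ha j) (lt_of_lt_of_le hbm (hbmono hj))
  -- continuity of h
  have hcont : ∀ Y : ℝ, 0 ≤ Y → ContinuousOn h (Icc (-Y) Y) := fun Y hY =>
    (aux10_cont (fun j => a j * b j) hsum Y hY).congr (fun y _ => hh y)
  -- value at 0
  have h0 : h 0 = a 0 * b 0 := by
    rw [hh 0, tsum_eq_single 0 (fun j hj => by simp [zero_pow hj])]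
    simp
  -- large y positive
  have hcm1 : 0 < a (m + 1) * b (m + 1) := hcpos (m + 1) (Nat.le_succ m)
  obtain ⟨y2, hy21, hy2pos'⟩ :
      ∃ y2 : ℝ, 1 ≤ y2 ∧ 0 < ∑' j : ℕ, a j * b j * y2 ^ j := by
    refine ⟨max 1 (((∑ j ∈ Finset.range m, |a j * b j|) + 1) / (a (m + 1) * b (m + 1))),
      le_max_left _ _, ?_⟩
    have hy21 : (1:ℝ) ≤ max 1 (((∑ j ∈ Finset.range m, |a j * b j|) + 1)
        / (a (m + 1) * b (m + 1))) := le_max_left _ _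
    refine aux10_big (fun j => a j * b j) m _
      (aux10_summable (fun j => a j * b j) hsum _)
      (fun j hj => (hcpos j hj).le) hy21 ?_
    have hle := le_max_right (1:ℝ)
      (((∑ j ∈ Finset.range m, |a j * b j|) + 1) / (a (m + 1) * b (m + 1)))
    rw [div_le_iff₀ hcm1] at hle
    linarith
  have hy2pos : 0 < h y2 := by rw [hh y2]; exact hy2pos'
  have hy20 : (0:ℝ) < y2 := lt_of_lt_of_le zero_lt_one hy21
  -- IVT
  obtain ⟨ystar, hysmem, hysroot⟩ : ∃ ystar ∈ Ioo (0:ℝ) y2, h ystar = 0 := by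
    have hconty : ContinuousOn h (Icc 0 y2) :=
      (hcont y2 hy20.le).mono (Icc_subset_Icc (by linarith) le_rfl)
    have h0mem : (0:ℝ) ∈ Ioo (h 0) (h y2) := ⟨by rw [h0]; exact hc0, hy2pos⟩
    obtain ⟨ystar, hmem, heq⟩ := intermediate_value_Ioo hy20.le hconty h0mem
    exact ⟨ystar, hmem, heq⟩
  have hyspos : 0 < ystar := hysmem.1
  -- strict monotonicity of h y / y^m on positives
  have hg : ∀ x z : ℝ, 0 < x → x < z → h x / x ^ m < h z / z ^ m := by
    intro x z hx hxz
    rw [hh x, hh z]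
    exact aux10_mono (fun j => a j * b j) m hsum hc0 hm1 hcneg
      (fun j hj => (hcpos j hj).le) x z hx hxz
  have hys0 : h ystar / ystar ^ m = 0 := by rw [hysroot]; simp
  -- sign characterization for y > 0
  have hsign : ∀ y : ℝ, 0 < y → (h y < 0 ↔ y < ystar) := by
    intro y hy
    have hpm : 0 < y ^ m := pow_pos hy m
    have hrep : h y = h y / y ^ m * y ^ m := by field_simp
    constructor
    · intro hneg
      by_contra hge
      push_neg at hge
      rcases eq_or_lt_of_le hge with heq | hlt
      · rw [heq] at hysroot; linarith
      · have h1 := hg ystar y hyspos hlt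
        rw [hys0] at h1
        have h2 : 0 < h y := by rw [hrep]; exact mul_pos h1 hpm
        linarith
    · intro hlt
      have h1 := hg y ystar hy hlt
      rw [hys0] at h1
      rw [hrep]
      exact mul_neg_of_neg_of_pos h1 hpm
  refine ⟨ystar, hyspos, hysroot, ?_, ?_⟩
  · intro y hy hroot
    by_contra hne
    rcases lt_or_gt_of_ne hne with hlt | hgt
    · have := hg y ystar hy hlt
      rw [hys0, hroot] at this
      simp at this
    · have := hg ystar y hyspos hgt
      rw [hys0, hroot] at this
      simp at this
  · intro y hy
    rcases eq_or_lt_of_le hy with heq | hpos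
    · rw [← heq, h0]
      exact ⟨fun _ => hyspos, fun _ => hc0⟩
    · exact hsign y hpos
end

section
/- Fix α > 0 and n > 0, let A_k = (Γ(α/2)/Γ(n/2)) · Γ(k + n/2) / (Γ(k + α/2) · 2^k · k!), and define F_{α,n}(z) = Σ_{k=0}^∞ (2k − n)·A_k·z^k for z ≥ 0. Then F_{α,n} has a unique positive root Z_{α,n} ∈ (0,∞), and F_{α,n}(z) < 0 for all z ∈ [0, Z_{α,n}). -/
open Real

set_option maxHeartbeats 1000000

/-- For `α > 0`, `n > 0` with `A_k = (Γ(α/2)/Γ(n/2))·Γ(k+n/2)/(Γ(k+α/2)·2^k·k!)`, the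
function `F(z) = Σ (2k − n)·A_k·z^k` has a unique positive root `Z ∈ (0,∞)`, and
`F(z) < 0` for all `z ∈ [0, Z)`. -/
theorem stmt_11 (α n : ℝ) (hα : 0 < α) (hn : 0 < n) (A : ℕ → ℝ)
    (hA : ∀ k : ℕ,
      A k = Real.Gamma (α / 2) / Real.Gamma (n / 2) *
        (Real.Gamma ((k : ℝ) + n / 2) /
          (Real.Gamma ((k : ℝ) + α / 2) * 2 ^ k * (Nat.factorial k : ℝ))))
    (F : ℝ → ℝ) (hF : ∀ z : ℝ, F z = ∑' k : ℕ, (2 * (k : ℝ) - n) * A k * z ^ k) :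
    ∃ Z : ℝ, 0 < Z ∧ F Z = 0 ∧
      (∀ z : ℝ, 0 < z → F z = 0 → z = Z) ∧
      ∀ z : ℝ, 0 ≤ z → z < Z → F z < 0 := by
  have hn2 : (0:ℝ) < n / 2 := by linarith
  have hα2 : (0:ℝ) < α / 2 := by linarith
  set c : ℕ → ℝ := fun k => (2 * (k:ℝ) - n) * A k with hc
  have hFc : ∀ z : ℝ, F z = ∑' k : ℕ, c k * z ^ k := fun z => hF z
  -- positivity of A
  have hApos : ∀ k : ℕ, 0 < A k := by
    intro k
    rw [hA k]
    have h1 := Real.Gamma_pos_of_pos hα2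
    have h2 := Real.Gamma_pos_of_pos hn2
    have h3 : 0 < Real.Gamma ((k:ℝ) + n / 2) :=
      Real.Gamma_pos_of_pos (by positivity)
    have h4 : 0 < Real.Gamma ((k:ℝ) + α / 2) :=
      Real.Gamma_pos_of_pos (by positivity)
    have h5 : (0:ℝ) < (Nat.factorial k : ℝ) := by
      exact_mod_cast Nat.factorial_pos k
    positivity
  have hA0 : A 0 = 1 := by
    rw [hA 0]
    have h1 := (Real.Gamma_pos_of_pos hα2).ne'
    have h2 := (Real.Gamma_pos_of_pos hn2).ne'
    simp only [Nat.cast_zero, zero_add, Nat.factorial_zero, Nat.cast_one, pow_zero]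
    field_simp
  -- recurrence
  have hArec : ∀ k : ℕ, A (k + 1) =
      A k * (((k:ℝ) + n / 2) / (2 * ((k:ℝ) + 1) * ((k:ℝ) + α / 2))) := by
    intro k
    have hgn : Real.Gamma (((k:ℝ) + n / 2) + 1) = ((k:ℝ) + n / 2) * Real.Gamma ((k:ℝ) + n / 2) :=
      Real.Gamma_add_one (by positivity)
    have hga : Real.Gamma (((k:ℝ) + α / 2) + 1) = ((k:ℝ) + α / 2) * Real.Gamma ((k:ℝ) + α / 2) :=
      Real.Gamma_add_one (by positivity)
    have e1 : ((k + 1 : ℕ) : ℝ) + n / 2 = ((k:ℝ) + n / 2) + 1 := by push_cast; ring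
    have e2 : ((k + 1 : ℕ) : ℝ) + α / 2 = ((k:ℝ) + α / 2) + 1 := by push_cast; ring
    have hf : (Nat.factorial (k + 1) : ℝ) = ((k:ℝ) + 1) * (Nat.factorial k : ℝ) := by
      rw [Nat.factorial_succ]; push_cast; ring
    rw [hA (k + 1), hA k, e1, e2, hgn, hga, hf, pow_succ]
    have h3 : Real.Gamma ((k:ℝ) + α / 2) ≠ 0 := (Real.Gamma_pos_of_pos (by positivity)).ne'
    have h5 : (Nat.factorial k : ℝ) ≠ 0 := by exact_mod_cast (Nat.factorial_pos k).ne'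
    have h6 : ((k:ℝ) + 1) ≠ 0 := by positivity
    have h7 : ((k:ℝ) + α / 2) ≠ 0 := by positivity
    have h8 : (2:ℝ) ^ k ≠ 0 := by positivity
    field_simp
  -- summability of |c k| * B ^ k
  have hsummAbs : ∀ B : ℝ, 0 ≤ B → Summable (fun k : ℕ => |c k| * B ^ k) := by
    intro B hB
    apply summable_of_ratio_norm_eventually_le (r := 1/2) (by norm_num)
    filter_upwards [Filter.eventually_ge_atTop (⌈max (max 1 n) (4 * B * (1 + n))⌉₊ + 1)]
      with k hk
    have hk' : max (max 1 n) (4 * B * (1 + n)) ≤ (k:ℝ) := by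
      have : ⌈max (max 1 n) (4 * B * (1 + n))⌉₊ ≤ k := le_trans (Nat.le_succ _) hk
      exact Nat.ceil_le.mp this
    have hk1 : (1:ℝ) ≤ (k:ℝ) := le_trans (le_trans (le_max_left 1 n) (le_max_left _ _)) hk'
    have hkn : n ≤ (k:ℝ) := le_trans (le_trans (le_max_right 1 n) (le_max_left _ _)) hk'
    have hkB : 4 * B * (1 + n) ≤ (k:ℝ) := le_trans (le_max_right _ _) hk'
    have hnonneg : (0:ℝ) ≤ |c k| * B ^ k := by positivity
    have hnonneg' : (0:ℝ) ≤ |c (k+1)| * B ^ (k+1) := by positivity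
    rw [Real.norm_eq_abs, Real.norm_eq_abs, abs_of_nonneg hnonneg, abs_of_nonneg hnonneg']
    have hck : |c k| = (2 * (k:ℝ) - n) * A k := by
      have hcv : c k = (2 * (k:ℝ) - n) * A k := rfl
      rw [hcv]
      exact abs_of_nonneg (mul_nonneg (by linarith) (hApos k).le)
    have hck1 : |c (k+1)| = (2 * ((k:ℝ) + 1) - n) * A (k+1) := by
      have hcv : c (k+1) = (2 * ((k:ℝ) + 1) - n) * A (k+1) := by
        simp only [hc]; push_cast; ring
      rw [hcv]
      exact abs_of_nonneg (mul_nonneg (by linarith) (hApos (k+1)).le)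
    rw [hck, hck1, hArec k]
    have hr : ((k:ℝ) + n / 2) / (2 * ((k:ℝ) + 1) * ((k:ℝ) + α / 2)) * B ≤ 1/8 := by
      have hden : 2 * (k:ℝ) * (k:ℝ) ≤ 2 * ((k:ℝ) + 1) * ((k:ℝ) + α / 2) := by nlinarith
      have hnum : (k:ℝ) + n / 2 ≤ (k:ℝ) * (1 + n) := by nlinarith
      have hdpos : (0:ℝ) < 2 * (k:ℝ) * (k:ℝ) := by nlinarith
      have h1 : ((k:ℝ) + n / 2) / (2 * ((k:ℝ) + 1) * ((k:ℝ) + α / 2)) ≤ (1 + n) / (2 * (k:ℝ)) := by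
        rw [div_le_div_iff₀ (by nlinarith) (by nlinarith)]
        nlinarith
      have h2 : ((k:ℝ) + n / 2) / (2 * ((k:ℝ) + 1) * ((k:ℝ) + α / 2)) * B ≤ (1 + n) / (2 * (k:ℝ)) * B :=
        mul_le_mul_of_nonneg_right h1 hB
      refine le_trans h2 ?_
      rw [div_mul_eq_mul_div, div_le_div_iff₀ (by nlinarith) (by norm_num)]
      nlinarith
    have hcoef : 2 * ((k:ℝ) + 1) - n ≤ 4 * (2 * (k:ℝ) - n) := by nlinarith
    have hrpos : (0:ℝ) ≤ ((k:ℝ) + n / 2) / (2 * ((k:ℝ) + 1) * ((k:ℝ) + α / 2)) := by positivity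
    have hcpos : (0:ℝ) ≤ 2 * (k:ℝ) - n := by linarith
    have hAk := (hApos k).le
    have hBk : (0:ℝ) ≤ B ^ k := by positivity
    calc (2 * ((k:ℝ) + 1) - n) * (A k * (((k:ℝ) + n / 2) / (2 * ((k:ℝ) + 1) * ((k:ℝ) + α / 2)))) * B ^ (k+1)
        = (2 * ((k:ℝ) + 1) - n) * A k * B ^ k * (((k:ℝ) + n / 2) / (2 * ((k:ℝ) + 1) * ((k:ℝ) + α / 2)) * B) := by
          rw [pow_succ]; ring
      _ ≤ (4 * (2 * (k:ℝ) - n)) * A k * B ^ k * (1/8) := by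
          apply mul_le_mul
          · apply mul_le_mul_of_nonneg_right (mul_le_mul_of_nonneg_right hcoef hAk) hBk
          · exact hr
          · positivity
          · positivity
      _ = 1/2 * ((2 * (k:ℝ) - n) * A k * B ^ k) := by ring
  -- summability at each point
  have hsumm : ∀ z : ℝ, Summable (fun k : ℕ => c k * z ^ k) := by
    intro z
    apply Summable.of_abs
    simpa [abs_mul, abs_pow, mul_assoc] using hsummAbs |z| (abs_nonneg z)
  -- F 0 = -n
  have hF0 : F 0 = -n := by
    rw [hFc 0, tsum_eq_single 0 (by
      intro k hk
      simp [zero_pow hk])]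
    simp [hc, hA0]
  -- monotonicity of z ↦ z^(-(n/2)) * F z on (0, ∞)
  have hGmono : ∀ x y : ℝ, 0 < x → x < y →
      x ^ (-(n/2)) * F x < y ^ (-(n/2)) * F y := by
    intro x y hx hxy
    have hy : 0 < y := lt_trans hx hxy
    have hgx : ∀ z : ℝ, 0 < z → z ^ (-(n/2)) * F z = ∑' k : ℕ, c k * z ^ ((k:ℝ) - n/2) := by
      intro z hz
      rw [hFc z, ← tsum_mul_left]
      congr 1
      funext k
      rw [show (k:ℝ) - n/2 = -(n/2) + (k:ℝ) by ring, Real.rpow_add hz, Real.rpow_natCast]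
      ring
    rw [hgx x hx, hgx y hy]
    have hsx : Summable (fun k : ℕ => c k * x ^ ((k:ℝ) - n/2)) := by
      have := (hsumm x).mul_right (x ^ (-(n/2)))
      refine this.congr fun k => ?_
      rw [show (k:ℝ) - n/2 = -(n/2) + (k:ℝ) by ring, Real.rpow_add hx, Real.rpow_natCast]
      ring
    have hsy : Summable (fun k : ℕ => c k * y ^ ((k:ℝ) - n/2)) := by
      have := (hsumm y).mul_right (y ^ (-(n/2)))
      refine this.congr fun k => ?_
      rw [show (k:ℝ) - n/2 = -(n/2) + (k:ℝ) by ring, Real.rpow_add hy, Real.rpow_natCast]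
      ring
    rw [← sub_pos, ← Summable.tsum_sub hsy hsx]
    apply Summable.tsum_pos (hsy.sub hsx) ?_ 0
    · -- strict at k = 0
      have hc0 : c 0 = -n := by simp [hc, hA0]
      simp only [hc0, Nat.cast_zero, zero_sub]
      have h := Real.rpow_lt_rpow_of_neg hx hxy (by linarith : -(n/2) < 0)
      nlinarith
    · intro k
      rcases le_or_gt n (2 * (k:ℝ)) with h | h
      · have hcnn : 0 ≤ c k := mul_nonneg (by linarith) (hApos k).le
        have := Real.rpow_le_rpow hx.le hxy.le (by linarith : (0:ℝ) ≤ (k:ℝ) - n/2)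
        have := mul_le_mul_of_nonneg_left this hcnn
        linarith
      · have hcn : c k ≤ 0 := mul_nonpos_of_nonpos_of_nonneg (by linarith) (hApos k).le
        have := Real.rpow_le_rpow_of_nonpos hx hxy.le (by linarith : (k:ℝ) - n/2 ≤ 0)
        have := mul_le_mul_of_nonpos_left this hcn
        linarith
  -- F is eventually positive
  obtain ⟨z₀, hz₀1, hz₀pos⟩ : ∃ z₀ : ℝ, 1 ≤ z₀ ∧ 0 < F z₀ := by
    set k₀ : ℕ := ⌈n⌉₊ with hk₀
    have hk₀n : n ≤ (k₀:ℝ) := Nat.le_ceil n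
    have hck₁pos : 0 < c (k₀ + 1) := by
      apply mul_pos _ (hApos (k₀ + 1))
      push_cast
      linarith
    set S : ℝ := ∑ k ∈ Finset.range k₀, |c k| with hS
    have hSnn : 0 ≤ S := Finset.sum_nonneg fun k _ => abs_nonneg _
    refine ⟨max 1 ((S + 1) / c (k₀ + 1)), le_max_left _ _, ?_⟩
    set z := max 1 ((S + 1) / c (k₀ + 1)) with hz
    have hz1 : (1:ℝ) ≤ z := le_max_left _ _
    have hzpos : (0:ℝ) < z := by linarith
    have hzc : S + 1 ≤ c (k₀ + 1) * z := by
      have : (S + 1) / c (k₀ + 1) ≤ z := le_max_right _ _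
      calc S + 1 = c (k₀ + 1) * ((S + 1) / c (k₀ + 1)) := by field_simp
        _ ≤ c (k₀ + 1) * z := mul_le_mul_of_nonneg_left this hck₁pos.le
    have hsplit := Summable.sum_add_tsum_nat_add k₀ (hsumm z)
    have htail_summ : Summable (fun k : ℕ => c (k + k₀) * z ^ (k + k₀)) :=
      (summable_nat_add_iff k₀).mpr (hsumm z)
    have htail_nonneg : ∀ k : ℕ, 0 ≤ c (k + k₀) * z ^ (k + k₀) := by
      intro k
      apply mul_nonneg _ (by positivity)
      apply mul_nonneg _ (hApos _).le
      push_cast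
      linarith
    have htail : c (1 + k₀) * z ^ (1 + k₀) ≤ ∑' k : ℕ, c (k + k₀) * z ^ (k + k₀) :=
      Summable.le_tsum htail_summ 1 fun j _ => htail_nonneg j
    have hhead : -(S * z ^ k₀) ≤ ∑ k ∈ Finset.range k₀, c k * z ^ k := by
      have h1 : ∀ k ∈ Finset.range k₀, -(|c k| * z ^ k₀) ≤ c k * z ^ k := by
        intro k hk
        have hk' : k ≤ k₀ := (Finset.mem_range.mp hk).le
        have hzk : z ^ k ≤ z ^ k₀ := pow_le_pow_right₀ hz1 hk'
        have : |c k * z ^ k| ≤ |c k| * z ^ k₀ := by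
          rw [abs_mul, abs_pow, abs_of_pos hzpos]
          exact mul_le_mul_of_nonneg_left hzk (abs_nonneg _)
        have := neg_abs_le (c k * z ^ k)
        nlinarith [abs_nonneg (c k * z ^ k)]
      calc -(S * z ^ k₀) = ∑ k ∈ Finset.range k₀, -(|c k| * z ^ k₀) := by
            rw [hS, Finset.sum_mul, ← Finset.sum_neg_distrib]
        _ ≤ ∑ k ∈ Finset.range k₀, c k * z ^ k := Finset.sum_le_sum h1
    have hFz : F z = ∑ k ∈ Finset.range k₀, c k * z ^ k + ∑' k : ℕ, c (k + k₀) * z ^ (k + k₀) := by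
      rw [hFc z, ← hsplit]
    rw [hFz]
    have h1k₀ : c (1 + k₀) * z ^ (1 + k₀) = c (k₀ + 1) * z * z ^ k₀ := by
      rw [Nat.add_comm 1 k₀, pow_succ]
      ring
    have hzk₀pos : (0:ℝ) < z ^ k₀ := by positivity
    nlinarith [htail, hhead, mul_le_mul_of_nonneg_right hzc hzk₀pos.le]
  -- continuity on [0, z₀]
  have hcont : ContinuousOn F (Set.Icc 0 z₀) := by
    have h0 : ContinuousOn (fun z : ℝ => ∑' k : ℕ, c k * z ^ k) (Set.Icc 0 z₀) := by
      apply continuousOn_tsum (u := fun k : ℕ => |c k| * z₀ ^ k)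
      · intro k
        exact (continuous_const.mul (continuous_pow k)).continuousOn
      · exact hsummAbs z₀ (by linarith)
      · intro k x hx
        rw [Real.norm_eq_abs, abs_mul, abs_pow]
        apply mul_le_mul_of_nonneg_left _ (abs_nonneg _)
        apply pow_le_pow_left₀ (abs_nonneg x)
        rw [abs_of_nonneg hx.1]
        exact hx.2
    refine h0.congr fun z _ => hFc z
  -- IVT
  have hrange : (0:ℝ) ∈ Set.Icc (F 0) (F z₀) := ⟨by rw [hF0]; linarith, hz₀pos.le⟩
  obtain ⟨Z, hZmem, hZ0⟩ := intermediate_value_Icc (by linarith : (0:ℝ) ≤ z₀) hcont hrange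
  have hZpos : 0 < Z := by
    rcases lt_or_eq_of_le hZmem.1 with h | h
    · exact h
    · exfalso
      rw [← h] at hZ0
      rw [hF0] at hZ0
      linarith
  refine ⟨Z, hZpos, hZ0, ?_, ?_⟩
  · intro z hz hFz
    by_contra hne
    rcases lt_or_gt_of_ne hne with h | h
    · have := hGmono z Z hz h
      rw [hFz, hZ0] at this
      simp at this
    · have := hGmono Z z hZpos h
      rw [hFz, hZ0] at this
      simp at this
  · intro z hz hzZ
    rcases eq_or_lt_of_le hz with h | h
    · rw [← h, hF0]; linarith
    · have hmono := hGmono z Z h hzZ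
      rw [hZ0, mul_zero] at hmono
      have hpow : 0 < z ^ (-(n/2)) := Real.rpow_pos_of_pos h _
      by_contra hcon
      push_neg at hcon
      nlinarith
end

section
/- Fix α > 0 and n > 0, let ψ(y) = Σ_{k=0}^∞ A_k·y^k with A_k = (Γ(α/2)/Γ(n/2)) · Γ(k + n/2) / (Γ(k + α/2) · 2^k · k!), and let Z = Z_{α,n} be the unique positive root of F_{α,n}(z) = Σ_{k=0}^∞ (2k − n)·A_k·z^k. Then for every z ∈ [0, Z], the function g(z) = Z^{n/2}·ψ(z)/ψ(Z) satisfies g(z) ≥ z^{n/2}. -/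
open Real

/-- For `α > 0`, `n > 0`, with `ψ(y) = Σ A_k·y^k` and `Z` the unique positive root of
`F(z) = Σ (2k − n)·A_k·z^k`, the function `g(z) = Z^{n/2}·ψ(z)/ψ(Z)` satisfies
`g(z) ≥ z^{n/2}` for every `z ∈ [0, Z]`. -/
theorem stmt_12 (α n : ℝ) (hα : 0 < α) (hn : 0 < n) (A : ℕ → ℝ)
    (hA : ∀ k : ℕ,
      A k = Real.Gamma (α / 2) / Real.Gamma (n / 2) *
        (Real.Gamma ((k : ℝ) + n / 2) /
          (Real.Gamma ((k : ℝ) + α / 2) * 2 ^ k * (Nat.factorial k : ℝ))))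
    (ψ : ℝ → ℝ) (hψ : ∀ y : ℝ, ψ y = ∑' k : ℕ, A k * y ^ k)
    (F : ℝ → ℝ) (hF : ∀ z : ℝ, F z = ∑' k : ℕ, (2 * (k : ℝ) - n) * A k * z ^ k)
    (Z : ℝ) (hZpos : 0 < Z) (hZroot : F Z = 0)
    (hZuniq : ∀ z : ℝ, 0 < z → F z = 0 → z = Z) :
    ∀ z ∈ Set.Icc (0:ℝ) Z, z ^ (n / 2) ≤ Z ^ (n / 2) * ψ z / ψ Z := by
  -- positivity of the coefficients
  have hA0 : ∀ k : ℕ, 0 < A k := by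
    intro k
    rw [hA k]
    have h1 : 0 < Real.Gamma (α/2) := Real.Gamma_pos_of_pos (by linarith)
    have h2 : 0 < Real.Gamma (n/2) := Real.Gamma_pos_of_pos (by linarith)
    have h3 : 0 < Real.Gamma ((k:ℝ) + n/2) := Real.Gamma_pos_of_pos (by positivity)
    have h4 : 0 < Real.Gamma ((k:ℝ) + α/2) := Real.Gamma_pos_of_pos (by positivity)
    have h5 : (0:ℝ) < (Nat.factorial k : ℝ) := by
      exact_mod_cast Nat.factorial_pos k
    positivity
  -- recurrence for the coefficients
  have hrec : ∀ k : ℕ, A (k+1)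
      = A k * (((k:ℝ) + n/2) / (((k:ℝ) + α/2) * 2 * ((k:ℝ)+1))) := by
    intro k
    have hn2 : ((k:ℝ) + n/2) ≠ 0 := by positivity
    have ha2 : ((k:ℝ) + α/2) ≠ 0 := by positivity
    have e1 : ((k+1 : ℕ):ℝ) + n/2 = ((k:ℝ) + n/2) + 1 := by push_cast; ring
    have e2 : ((k+1 : ℕ):ℝ) + α/2 = ((k:ℝ) + α/2) + 1 := by push_cast; ring
    have h3 : Real.Gamma ((k:ℝ) + n/2) ≠ 0 :=
      (Real.Gamma_pos_of_pos (by positivity)).ne'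
    have h4 : Real.Gamma ((k:ℝ) + α/2) ≠ 0 :=
      (Real.Gamma_pos_of_pos (by positivity)).ne'
    have h5 : ((Nat.factorial k : ℝ)) ≠ 0 := by
      exact_mod_cast (Nat.factorial_pos k).ne'
    have h6 : ((2:ℝ)) ^ k ≠ 0 := by positivity
    rw [hA (k+1), hA k, e1, e2, Real.Gamma_add_one hn2, Real.Gamma_add_one ha2,
      Nat.factorial_succ]
    push_cast
    rw [pow_succ]
    field_simp
  -- the constant M and the key growth bound
  set M : ℝ := 1 + n / α with hM
  have hMpos : 0 < M := by positivity
  have hkey : ∀ k : ℕ, (k:ℝ) + n/2 ≤ M * ((k:ℝ) + α/2) := by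
    intro k
    have hna : n / α * α = n := div_mul_cancel₀ n hα.ne'
    have h1 : 0 ≤ n / α * (k:ℝ) :=
      mul_nonneg (div_nonneg hn.le hα.le) (Nat.cast_nonneg k)
    rw [hM]
    nlinarith [hα, hn]
  clear_value M
  -- summability of the dominating series
  have hsum1 : ∀ y : ℝ, 0 ≤ y → Summable (fun k : ℕ => ((k:ℝ)+1) * A k * y ^ k) := by
    intro y hy
    apply summable_of_ratio_norm_eventually_le (r := 1/2) (by norm_num)
    filter_upwards [Filter.eventually_ge_atTop ⌈2*y*M⌉₊] with k hk
    have hk' : 2*y*M ≤ (k:ℝ) := le_trans (Nat.le_ceil _) (Nat.cast_le.mpr hk)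
    have hyk : (0:ℝ) ≤ y ^ k := pow_nonneg hy k
    have hAk := hA0 k
    have hAk1 := hA0 (k+1)
    have s1 : y * ((k:ℝ)+n/2) ≤ y * (M*((k:ℝ)+α/2)) :=
      mul_le_mul_of_nonneg_left (hkey k) hy
    have s2 : y * M ≤ (k:ℝ)/2 := by nlinarith [hk']
    have s3 : y * ((k:ℝ)+n/2) ≤ (k:ℝ)/2 * ((k:ℝ)+α/2) := by
      refine le_trans s1 ?_
      have : y * (M*((k:ℝ)+α/2)) = (y*M) * ((k:ℝ)+α/2) := by ring
      rw [this]
      exact mul_le_mul_of_nonneg_right s2 (by positivity)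
    have hq : ((k:ℝ)+2) * y * (((k:ℝ)+n/2) / (((k:ℝ)+α/2) * 2 * ((k:ℝ)+1)))
        ≤ ((k:ℝ)+1)/2 := by
      rw [← mul_div_assoc,
        div_le_div_iff₀ (by positivity : (0:ℝ) < ((k:ℝ)+α/2) * 2 * ((k:ℝ)+1))
          (by norm_num : (0:ℝ) < 2)]
      have s4 : 0 ≤ ((k:ℝ)+α/2) * ((k:ℝ)^2/2 + (k:ℝ) + 1) := by positivity
      nlinarith [mul_le_mul_of_nonneg_left s3 (show (0:ℝ) ≤ (k:ℝ)+2 by positivity)]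
    have hterm : (((k:ℝ)+1)+1) * A (k+1) * y^(k+1)
        ≤ 1/2 * (((k:ℝ)+1) * A k * y^k) := by
      rw [hrec k, pow_succ]
      have h7 : (((k:ℝ)+1)+1) * (A k * (((k:ℝ)+n/2) / (((k:ℝ)+α/2) * 2 * ((k:ℝ)+1)))) * (y^k * y)
          = (((k:ℝ)+2) * y * (((k:ℝ)+n/2) / (((k:ℝ)+α/2) * 2 * ((k:ℝ)+1)))) * (A k * y^k) := by
        ring
      rw [h7]
      have h8 : 1/2 * (((k:ℝ)+1) * A k * y^k) = (((k:ℝ)+1)/2) * (A k * y^k) := by ring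
      rw [h8]
      exact mul_le_mul_of_nonneg_right hq (by positivity)
    calc ‖(((k+1:ℕ):ℝ)+1) * A (k+1) * y^(k+1)‖
        = (((k:ℝ)+1)+1) * A (k+1) * y^(k+1) := by
          rw [Real.norm_of_nonneg (by positivity)]; push_cast; ring
      _ ≤ 1/2 * (((k:ℝ)+1) * A k * y^k) := hterm
      _ = 1/2 * ‖((k:ℝ)+1) * A k * y^k‖ := by
          rw [Real.norm_of_nonneg (by positivity)]
  have hΨsum : ∀ y : ℝ, 0 ≤ y → Summable (fun k : ℕ => A k * y ^ k) := by
    intro y hy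
    refine Summable.of_nonneg_of_le
      (fun k => mul_nonneg (hA0 k).le (pow_nonneg hy k)) (fun k => ?_) (hsum1 y hy)
    have h1 : (0:ℝ) ≤ A k * y ^ k := mul_nonneg (hA0 k).le (pow_nonneg hy k)
    nlinarith [h1]
  have hFsum : Summable (fun k : ℕ => (2*(k:ℝ) - n) * A k * Z ^ k) := by
    apply Summable.of_norm
    refine Summable.of_nonneg_of_le (fun k => norm_nonneg _) (fun k => ?_)
      ((hsum1 Z hZpos.le).mul_left (2 + n))
    have hAZ : (0:ℝ) ≤ A k * Z ^ k := mul_nonneg (hA0 k).le (pow_nonneg hZpos.le k)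
    have h1 : |2*(k:ℝ) - n| ≤ (2+n) * ((k:ℝ)+1) := by
      rw [abs_le]
      constructor <;> nlinarith [Nat.cast_nonneg (α := ℝ) k, hn]
    calc ‖(2*(k:ℝ) - n) * A k * Z ^ k‖
        = |2*(k:ℝ) - n| * (A k * Z ^ k) := by
          rw [norm_mul, norm_mul, Real.norm_of_nonneg (hA0 k).le,
            Real.norm_of_nonneg (pow_nonneg hZpos.le k), Real.norm_eq_abs, mul_assoc]
      _ ≤ ((2+n) * ((k:ℝ)+1)) * (A k * Z ^ k) := by
          exact mul_le_mul_of_nonneg_right h1 hAZ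
      _ = (2+n) * (((k:ℝ)+1) * A k * Z ^ k) := by ring
  have hψZpos : 0 < ψ Z := by
    rw [hψ]
    refine Summable.tsum_pos (hΨsum Z hZpos.le) (fun k => mul_nonneg (hA0 k).le (pow_nonneg hZpos.le k)) 0 ?_
    simpa using hA0 0
  intro z hz
  rcases eq_or_lt_of_le hz.1 with hz0 | hzpos
  · -- z = 0
    rw [← hz0, Real.zero_rpow (by linarith : (n/2:ℝ) ≠ 0)]
    have hψ0 : 0 ≤ ψ 0 := by
      rw [hψ]
      exact tsum_nonneg (fun k => mul_nonneg (hA0 k).le (by positivity))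
    exact div_nonneg (mul_nonneg (Real.rpow_nonneg hZpos.le _) hψ0) hψZpos.le
  · -- z > 0
    set t : ℝ := z / Z with ht
    have htpos : 0 < t := div_pos hzpos hZpos
    have hzZ : z = Z * t := by rw [ht]; field_simp
    set c : ℝ := t ^ (n/2 : ℝ) with hcdef
    have hcpos : 0 < c := Real.rpow_pos_of_pos htpos _
    set L : ℝ := Real.log t with hL
    -- pointwise tangent-line bound
    have hpt : ∀ k : ℕ,
        c * (A k * Z ^ k) + (c * L / 2) * ((2*(k:ℝ) - n) * A k * Z ^ k)
          ≤ A k * z ^ k := by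
      intro k
      have hAZ : (0:ℝ) ≤ A k * Z ^ k := mul_nonneg (hA0 k).le (pow_nonneg hZpos.le k)
      have htk : t ^ k = Real.exp ((k:ℝ) * L) := by
        rw [hL, ← Real.log_pow, Real.exp_log (pow_pos htpos k)]
      have hc : c = Real.exp ((n/2) * L) := by
        rw [hcdef, hL, ← Real.log_rpow htpos, Real.exp_log (Real.rpow_pos_of_pos htpos _)]
      have h1 := Real.add_one_le_exp ((k:ℝ)*L - (n/2)*L)
      have h2 : Real.exp ((n/2)*L) * (((k:ℝ)*L - (n/2)*L) + 1) ≤ Real.exp ((k:ℝ)*L) := by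
        calc Real.exp ((n/2)*L) * (((k:ℝ)*L - (n/2)*L) + 1)
            ≤ Real.exp ((n/2)*L) * Real.exp ((k:ℝ)*L - (n/2)*L) :=
              mul_le_mul_of_nonneg_left h1 (Real.exp_nonneg _)
          _ = Real.exp ((k:ℝ)*L) := by rw [← Real.exp_add]; ring_nf
      have h3 : c + c * (L * ((k:ℝ) - n/2)) ≤ t ^ k := by
        have he : c + c * (L * ((k:ℝ) - n/2))
            = Real.exp ((n/2)*L) * (((k:ℝ)*L - (n/2)*L) + 1) := by
          rw [hc]; ring
        rw [he, htk]; exact h2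
      have h4 := mul_le_mul_of_nonneg_right h3 hAZ
      have h5 : t ^ k * (A k * Z ^ k) = A k * z ^ k := by
        rw [hzZ, mul_pow]; ring
      calc c * (A k * Z ^ k) + (c * L / 2) * ((2*(k:ℝ) - n) * A k * Z ^ k)
          = (c + c * (L * ((k:ℝ) - n/2))) * (A k * Z ^ k) := by ring
        _ ≤ t ^ k * (A k * Z ^ k) := h4
        _ = A k * z ^ k := h5
    have hS1 : Summable (fun k : ℕ => c * (A k * Z ^ k)) := (hΨsum Z hZpos.le).mul_left c
    have hS2 : Summable (fun k : ℕ => (c * L / 2) * ((2*(k:ℝ) - n) * A k * Z ^ k)) :=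
      hFsum.mul_left _
    have hle : (∑' k : ℕ, (c * (A k * Z ^ k) + (c * L / 2) * ((2*(k:ℝ) - n) * A k * Z ^ k)))
        ≤ ∑' k : ℕ, A k * z ^ k :=
      Summable.tsum_le_tsum hpt (hS1.add hS2) (hΨsum z hz.1)
    have heq : (∑' k : ℕ, (c * (A k * Z ^ k) + (c * L / 2) * ((2*(k:ℝ) - n) * A k * Z ^ k)))
        = c * ψ Z + (c * L / 2) * F Z := by
      rw [Summable.tsum_add hS1 hS2, tsum_mul_left, tsum_mul_left, hψ, hF]
    rw [heq, hZroot, mul_zero, add_zero, ← hψ z] at hle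
    -- conclude
    rw [le_div_iff₀ hψZpos]
    have hzr : z ^ (n/2 : ℝ) = Z ^ (n/2 : ℝ) * c := by
      rw [hcdef, ht, Real.div_rpow hz.1 hZpos.le]
      field_simp
    rw [hzr]
    calc Z ^ (n/2 : ℝ) * c * ψ Z = Z ^ (n/2 : ℝ) * (c * ψ Z) := by ring
      _ ≤ Z ^ (n/2 : ℝ) * ψ z :=
        mul_le_mul_of_nonneg_left hle (Real.rpow_nonneg hZpos.le _)
end

section
/- For every α > 0 and n > 0, the unique positive root Z_{α,n} of F_{α,n}(z) = Σ_{k=0}^∞ (2k − n)·A_k·z^k satisfies Z_{α,n} ≥ (α + n − 2)/2. -/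
open Real

set_option maxHeartbeats 1000000 in
/-- For every `α > 0` and `n > 0`, the unique positive root `Z` of
`F(z) = Σ (2k − n)·A_k·z^k` satisfies `Z ≥ (α + n − 2)/2`. -/
theorem stmt_13 (α n : ℝ) (hα : 0 < α) (hn : 0 < n) (A : ℕ → ℝ)
    (hA : ∀ k : ℕ,
      A k = Real.Gamma (α / 2) / Real.Gamma (n / 2) *
        (Real.Gamma ((k : ℝ) + n / 2) /
          (Real.Gamma ((k : ℝ) + α / 2) * 2 ^ k * (Nat.factorial k : ℝ))))
    (F : ℝ → ℝ) (hF : ∀ z : ℝ, F z = ∑' k : ℕ, (2 * (k : ℝ) - n) * A k * z ^ k)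
    (Z : ℝ) (hZpos : 0 < Z) (hZroot : F Z = 0)
    (hZuniq : ∀ z : ℝ, 0 < z → F z = 0 → z = Z) :
    (α + n - 2) / 2 ≤ Z := by
  -- the positive sequence b k = A k * Z ^ k
  set b : ℕ → ℝ := fun k => A k * Z ^ k with hbdef
  have hApos : ∀ k : ℕ, 0 < A k := by
    intro k
    rw [hA k]
    have g1 : 0 < Real.Gamma (α / 2) := Real.Gamma_pos_of_pos (by positivity)
    have g2 : 0 < Real.Gamma (n / 2) := Real.Gamma_pos_of_pos (by positivity)
    have g3 : 0 < Real.Gamma ((k : ℝ) + n / 2) := Real.Gamma_pos_of_pos (by positivity)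
    have g4 : 0 < Real.Gamma ((k : ℝ) + α / 2) := Real.Gamma_pos_of_pos (by positivity)
    have g5 : (0 : ℝ) < (Nat.factorial k : ℝ) := by
      exact_mod_cast Nat.factorial_pos k
    positivity
  have hbpos : ∀ k : ℕ, 0 < b k := fun k => mul_pos (hApos k) (pow_pos hZpos k)
  -- recurrence for A
  have hrec : ∀ k : ℕ, 2 * ((k : ℝ) + 1) * ((k : ℝ) + α / 2) * A (k + 1)
      = ((k : ℝ) + n / 2) * A k := by
    intro k
    have hx : ((k : ℝ) + n / 2) ≠ 0 := by positivity
    have hy : ((k : ℝ) + α / 2) ≠ 0 := by positivity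
    have h1 : Real.Gamma ((↑(k + 1) : ℝ) + n / 2)
        = ((k : ℝ) + n / 2) * Real.Gamma ((k : ℝ) + n / 2) := by
      push_cast
      rw [show (k : ℝ) + 1 + n / 2 = ((k : ℝ) + n / 2) + 1 by ring, Real.Gamma_add_one hx]
    have h2 : Real.Gamma ((↑(k + 1) : ℝ) + α / 2)
        = ((k : ℝ) + α / 2) * Real.Gamma ((k : ℝ) + α / 2) := by
      push_cast
      rw [show (k : ℝ) + 1 + α / 2 = ((k : ℝ) + α / 2) + 1 by ring, Real.Gamma_add_one hy]
    have g2 : Real.Gamma (n / 2) ≠ 0 := ne_of_gt (Real.Gamma_pos_of_pos (by positivity))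
    have g4 : Real.Gamma ((k : ℝ) + α / 2) ≠ 0 :=
      ne_of_gt (Real.Gamma_pos_of_pos (by positivity))
    have hfac : ((Nat.factorial k : ℝ)) ≠ 0 := by
      exact_mod_cast Nat.factorial_ne_zero k
    have hpow : ((2 : ℝ)) ^ k ≠ 0 := by positivity
    rw [hA (k + 1), hA k, h1, h2]
    rw [show Nat.factorial (k + 1) = (k + 1) * Nat.factorial k from rfl]
    push_cast
    field_simp
    ring
  -- recurrence for b
  have hbrec : ∀ k : ℕ, 2 * ((k : ℝ) + 1) * ((k : ℝ) + α / 2) * b (k + 1)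
      = Z * ((k : ℝ) + n / 2) * b k := by
    intro k
    have : b (k + 1) = A (k + 1) * (Z ^ k * Z) := by
      simp [hbdef, pow_succ]
    rw [this]
    have hb' : b k = A k * Z ^ k := rfl
    rw [hb']
    linear_combination (Z ^ k * Z) * hrec k
  -- dominating summable sequence g k = (k+1)^2 * b k
  set g : ℕ → ℝ := fun k => ((k : ℝ) + 1) ^ 2 * b k with hgdef
  have hgpos : ∀ k, 0 < g k := fun k => by
    have := hbpos k; positivity
  obtain ⟨K₁, hK₁⟩ := exists_nat_ge (n / 2)
  obtain ⟨K₂, hK₂⟩ := exists_nat_ge (8 * Z)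
  have hsumg : Summable g := by
    apply summable_of_ratio_norm_eventually_le (r := 1 / 2) (by norm_num)
    rw [Filter.eventually_atTop]
    refine ⟨max K₁ K₂, fun k hk => ?_⟩
    have hk1 : n / 2 ≤ (k : ℝ) := le_trans hK₁ (by
      exact_mod_cast Nat.cast_le.mpr (le_trans (le_max_left _ _) hk))
    have hk2 : 8 * Z ≤ (k : ℝ) := le_trans hK₂ (by
      exact_mod_cast Nat.cast_le.mpr (le_trans (le_max_right _ _) hk))
    rw [Real.norm_eq_abs, Real.norm_eq_abs, abs_of_pos (hgpos _), abs_of_pos (hgpos _)]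
    -- goal: g (k+1) ≤ 1/2 * g k
    have hrk := hbrec k
    have hden : (0:ℝ) < 2 * ((k : ℝ) + 1) * ((k : ℝ) + α / 2) := by positivity
    have hbk1 : b (k + 1) = Z * ((k : ℝ) + n / 2) * b k
        / (2 * ((k : ℝ) + 1) * ((k : ℝ) + α / 2)) := by
      field_simp
      linarith [hrk]
    have hbk : 0 < b k := hbpos k
    have hkey : ((k : ℝ) + 2) ^ 2 * (Z * ((k : ℝ) + n / 2))
        ≤ (1 / 2) * ((k : ℝ) + 1) ^ 2 * (2 * ((k : ℝ) + 1) * ((k : ℝ) + α / 2)) := by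
      have knn : (0:ℝ) ≤ (k : ℝ) := Nat.cast_nonneg k
      have e1 : ((k : ℝ) + 2) ^ 2 ≤ 4 * ((k : ℝ) + 1) ^ 2 := by nlinarith
      have e2 : Z * ((k : ℝ) + n / 2) ≤ Z * (2 * (k : ℝ)) := by
        apply mul_le_mul_of_nonneg_left _ hZpos.le
        linarith
      have e3 : 8 * Z * (k : ℝ) ≤ (k : ℝ) * (k : ℝ) := by nlinarith
      have t2 : ((k : ℝ) + 2) ^ 2 * (Z * ((k : ℝ) + n / 2))
          ≤ (4 * ((k : ℝ) + 1) ^ 2) * (Z * (2 * (k : ℝ))) := by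
        apply mul_le_mul e1 e2 (by positivity) (by positivity)
      have t4 : ((k : ℝ) + 1) ^ 2 * (8 * Z * (k : ℝ))
          ≤ ((k : ℝ) + 1) ^ 2 * ((k : ℝ) * (k : ℝ)) :=
        mul_le_mul_of_nonneg_left e3 (by positivity)
      have t5 : ((k : ℝ) + 1) ^ 2 * ((k : ℝ) * (k : ℝ))
          ≤ ((k : ℝ) + 1) ^ 2 * (((k : ℝ) + 1) * ((k : ℝ) + α / 2)) := by
        apply mul_le_mul_of_nonneg_left _ (by positivity)
        nlinarith
      nlinarith [t2, t4, t5]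
    have hg1 : g (k + 1) = ((k : ℝ) + 2) ^ 2 * b (k + 1) := by
      simp only [hgdef]; push_cast; ring
    rw [hg1, hbk1]
    calc ((k : ℝ) + 2) ^ 2 * (Z * ((k : ℝ) + n / 2) * b k
          / (2 * ((k : ℝ) + 1) * ((k : ℝ) + α / 2)))
        = (((k : ℝ) + 2) ^ 2 * (Z * ((k : ℝ) + n / 2)) / (2 * ((k : ℝ) + 1) * ((k : ℝ) + α / 2))) * b k := by
          ring
      _ ≤ ((1 / 2) * ((k : ℝ) + 1) ^ 2) * b k := by
          apply mul_le_mul_of_nonneg_right _ hbk.le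
          rw [div_le_iff₀ hden]
          linarith [hkey]
      _ = 1 / 2 * g k := by simp only [hgdef]; ring
  -- summability of the component series
  have kb_le : ∀ k : ℕ, (k : ℝ) * b k ≤ g k := by
    intro k
    have := hbpos k
    have h1 : (k : ℝ) ≤ ((k : ℝ) + 1) ^ 2 := by nlinarith [Nat.cast_nonneg (α := ℝ) k]
    exact mul_le_mul_of_nonneg_right h1 this.le
  have k2b_le : ∀ k : ℕ, (k : ℝ) ^ 2 * b k ≤ g k := by
    intro k
    have := hbpos k
    have h1 : (k : ℝ) ^ 2 ≤ ((k : ℝ) + 1) ^ 2 := by nlinarith [Nat.cast_nonneg (α := ℝ) k]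
    exact mul_le_mul_of_nonneg_right h1 this.le
  have b_le : ∀ k : ℕ, b k ≤ g k := by
    intro k
    have h1 : (1 : ℝ) ≤ ((k : ℝ) + 1) ^ 2 := by nlinarith [Nat.cast_nonneg (α := ℝ) k]
    have h2 := mul_le_mul_of_nonneg_right h1 (hbpos k).le
    rw [one_mul] at h2
    exact h2
  have hsum0 : Summable b :=
    Summable.of_nonneg_of_le (fun k => (hbpos k).le) b_le hsumg
  have hsum1 : Summable (fun k : ℕ => (k : ℝ) * b k) :=
    Summable.of_nonneg_of_le (fun k => mul_nonneg (Nat.cast_nonneg k) (hbpos k).le) kb_le hsumg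
  have hsum2 : Summable (fun k : ℕ => (k : ℝ) ^ 2 * b k) :=
    Summable.of_nonneg_of_le (fun k => mul_nonneg (by positivity) (hbpos k).le) k2b_le hsumg
  set S0 : ℝ := ∑' k : ℕ, b k with hS0def
  set S1 : ℝ := ∑' k : ℕ, (k : ℝ) * b k with hS1def
  set S2 : ℝ := ∑' k : ℕ, (k : ℝ) ^ 2 * b k with hS2def
  -- First identity: 2 S1 = n S0
  have hE1 : 2 * S1 - n * S0 = 0 := by
    have h0 : (∑' k : ℕ, (2 * (k : ℝ) - n) * A k * Z ^ k) = 0 := by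
      rw [← hF Z]; exact hZroot
    have h1 : (∑' k : ℕ, (2 * (k : ℝ) - n) * A k * Z ^ k)
        = ∑' k : ℕ, (2 * ((k : ℝ) * b k) - n * b k) := by
      apply tsum_congr
      intro k
      simp only [hbdef]
      ring
    rw [h1, Summable.tsum_sub (hsum1.mul_left 2) (hsum0.mul_left n),
      tsum_mul_left, tsum_mul_left] at h0
    exact h0
  -- Second identity: 2 S2 + (α - 2) S1 = Z S1 + (Z n / 2) S0
  have hE2 : 2 * S2 + (α - 2) * S1 = Z * S1 + (Z * n / 2) * S0 := by
    set h : ℕ → ℝ := fun j => 2 * ((j : ℝ) ^ 2 * b j) + (α - 2) * ((j : ℝ) * b j) with hhdef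
    have hsumh : Summable h := (hsum2.mul_left 2).add (hsum1.mul_left (α - 2))
    have hshift : ∀ k : ℕ, h (k + 1) = Z * ((k : ℝ) + n / 2) * b k := by
      intro k
      have := hbrec k
      simp only [hhdef]
      push_cast
      nlinarith [hbrec k]
    have h0 : h 0 = 0 := by simp [hhdef]
    have hsplit : ∑' j : ℕ, h j = ∑' k : ℕ, h (k + 1) := by
      rw [Summable.tsum_eq_zero_add hsumh, h0, zero_add]
    have hL : ∑' j : ℕ, h j = 2 * S2 + (α - 2) * S1 := by
      rw [hhdef]
      rw [Summable.tsum_add (hsum2.mul_left 2) (hsum1.mul_left (α - 2)), tsum_mul_left, tsum_mul_left]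
    have hR : ∑' k : ℕ, h (k + 1) = Z * S1 + (Z * n / 2) * S0 := by
      have : ∀ k : ℕ, h (k + 1) = Z * ((k : ℝ) * b k) + (Z * n / 2) * b k := by
        intro k
        rw [hshift k]; ring
      rw [tsum_congr this, Summable.tsum_add (hsum1.mul_left Z) (hsum0.mul_left (Z * n / 2)),
        tsum_mul_left, tsum_mul_left]
    rw [← hL, hsplit, hR]
  -- Cauchy–Schwarz: S1 ^ 2 ≤ S0 * S2
  have hS0nonneg : 0 ≤ S0 := tsum_nonneg fun k => (hbpos k).le
  have hS2nonneg : 0 ≤ S2 := tsum_nonneg fun k => mul_nonneg (by positivity) (hbpos k).le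
  have hCS : S1 ^ 2 ≤ S0 * S2 := by
    have hpart : ∀ N : ℕ, (∑ k ∈ Finset.range N, (k : ℝ) * b k) ^ 2 ≤ S0 * S2 := by
      intro N
      have hcs := Finset.sum_mul_sq_le_sq_mul_sq (Finset.range N)
        (fun k => Real.sqrt (b k)) (fun k => (k : ℝ) * Real.sqrt (b k))
      have e1 : ∀ k : ℕ, Real.sqrt (b k) * ((k : ℝ) * Real.sqrt (b k)) = (k : ℝ) * b k := by
        intro k
        rw [show Real.sqrt (b k) * ((k : ℝ) * Real.sqrt (b k))
          = (k : ℝ) * (Real.sqrt (b k) * Real.sqrt (b k)) by ring,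
          Real.mul_self_sqrt (hbpos k).le]
      have e2 : ∀ k : ℕ, Real.sqrt (b k) ^ 2 = b k := fun k => Real.sq_sqrt (hbpos k).le
      have e3 : ∀ k : ℕ, ((k : ℝ) * Real.sqrt (b k)) ^ 2 = (k : ℝ) ^ 2 * b k := by
        intro k
        rw [mul_pow, Real.sq_sqrt (hbpos k).le]
      simp only [e1, e2, e3] at hcs
      refine le_trans hcs ?_
      have p1 : ∑ k ∈ Finset.range N, b k ≤ S0 :=
        Summable.sum_le_tsum _ (fun k _ => (hbpos k).le) hsum0
      have p2 : ∑ k ∈ Finset.range N, (k : ℝ) ^ 2 * b k ≤ S2 :=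
        Summable.sum_le_tsum _ (fun k _ => mul_nonneg (by positivity) (hbpos k).le) hsum2
      have p1' : 0 ≤ ∑ k ∈ Finset.range N, b k :=
        Finset.sum_nonneg fun k _ => (hbpos k).le
      have p2' : 0 ≤ ∑ k ∈ Finset.range N, (k : ℝ) ^ 2 * b k :=
        Finset.sum_nonneg fun k _ => mul_nonneg (by positivity) (hbpos k).le
      exact mul_le_mul p1 p2 p2' hS0nonneg
    have htend : Filter.Tendsto
        (fun N => (∑ k ∈ Finset.range N, (k : ℝ) * b k) ^ 2) Filter.atTop (nhds (S1 ^ 2)) :=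
      (hsum1.hasSum.tendsto_sum_nat).pow 2
    exact le_of_tendsto' htend hpart
  -- S0 > 0
  have hS0pos : 0 < S0 := by
    have := Summable.sum_le_tsum (Finset.range 1) (fun k _ => (hbpos k).le) hsum0
    simp only [Finset.range_one, Finset.sum_singleton] at this
    exact lt_of_lt_of_le (hbpos 0) this
  -- conclude
  have hS1v : S1 = n * S0 / 2 := by linarith
  have hS2v : S2 = n * S0 * (2 * Z - α + 2) / 4 := by
    linear_combination hE2 / 2 + ((Z - α + 2) / 2) * hS1v
  rw [hS1v, hS2v] at hCS
  have h4 : n ^ 2 * (S0 * S0) ≤ (n * (2 * Z - α + 2)) * (S0 * S0) := by nlinarith [hCS]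
  have h5 : n ^ 2 ≤ n * (2 * Z - α + 2) :=
    le_of_mul_le_mul_right h4 (mul_pos hS0pos hS0pos)
  nlinarith [h5, mul_pos hn hn]
end

section
/- Fix α > 0 and n > 0 with α + n > 2. Then F_{α,n}((α + n − 2)/2) < 0, where F_{α,n}(z) = Σ_{k=0}^∞ (2k − n)·A_k·z^k. -/
open Real
set_option maxHeartbeats 1000000 in

lemma aux_neg (a b : ℝ) (ha : 0 < a) (hb : 0 < b) (hab : 1 < a + b) (A : ℕ → ℝ)
    (hApos : ∀ k, 0 < A k)
    (hrec : ∀ k : ℕ, 2 * ((k : ℝ) + 1) * ((k : ℝ) + b) * A (k + 1) = ((k : ℝ) + a) * A k) :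
    (∑' k : ℕ, (2 * (k : ℝ) - 2 * a) * A k * (a + b - 1) ^ k) < 0 := by
  set z₁ : ℝ := a + b - 1 with hz₁def
  have hz₁ : 0 < z₁ := by simp only [hz₁def]; linarith
  set R : ℝ := z₁ + 1 with hRdef
  have hR1 : (1:ℝ) ≤ R := by simp only [hRdef]; linarith
  have hR0 : (0:ℝ) < R := by linarith
  -- explicit formula for A (k+1)
  have hA1 : ∀ k : ℕ, A (k+1) = ((k:ℝ) + a) * A k / (2 * ((k:ℝ) + 1) * ((k:ℝ) + b)) := by
    intro k
    have hd : (0:ℝ) < 2 * ((k:ℝ) + 1) * ((k:ℝ) + b) := by positivity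
    field_simp
    linarith [hrec k]
  -- master summable series
  have master : Summable (fun k : ℕ => ((k:ℝ) + 1) ^ 2 * A k * R ^ k) := by
    obtain ⟨K, hK⟩ := exists_nat_ge (max a (8 * R))
    apply summable_of_ratio_norm_eventually_le (r := 1/2) (by norm_num)
    rw [Filter.eventually_atTop]
    refine ⟨K, fun k hk => ?_⟩
    have hkK : (K : ℝ) ≤ (k : ℝ) := by exact_mod_cast hk
    have hka : a ≤ (k:ℝ) := le_trans (le_trans (le_max_left _ _) hK) hkK
    have hkR : 8 * R ≤ (k:ℝ) + 1 := by
      have := le_trans (le_trans (le_max_right _ _) hK) hkK; linarith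
    have hk0 : (0:ℝ) ≤ (k:ℝ) := Nat.cast_nonneg k
    have hAk := hApos k
    have hpos : (0:ℝ) < A k * R ^ k := by positivity
    have base : ((k:ℝ) + 2) ^ 2 * (((k:ℝ) + a) * R) ≤ ((k:ℝ) + 1) ^ 3 * ((k:ℝ) + b) := by
      calc ((k:ℝ) + 2) ^ 2 * (((k:ℝ) + a) * R)
          ≤ (2 * ((k:ℝ) + 1)) ^ 2 * ((2 * ((k:ℝ) + b)) * R) := by
            gcongr <;> linarith
        _ = ((k:ℝ) + 1) ^ 2 * ((k:ℝ) + b) * (8 * R) := by ring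
        _ ≤ ((k:ℝ) + 1) ^ 2 * ((k:ℝ) + b) * ((k:ℝ) + 1) := by
            have : (0:ℝ) ≤ ((k:ℝ) + 1) ^ 2 * ((k:ℝ) + b) := by positivity
            exact mul_le_mul_of_nonneg_left hkR this
        _ = ((k:ℝ) + 1) ^ 3 * ((k:ℝ) + b) := by ring
    rw [Real.norm_eq_abs, Real.norm_eq_abs,
      abs_of_nonneg (mul_nonneg (mul_nonneg (by positivity) (hApos (k+1)).le) (by positivity)),
      abs_of_nonneg (mul_nonneg (mul_nonneg (by positivity) (hApos k).le) (by positivity))]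
    have e1 : ((↑(k+1):ℝ) + 1) ^ 2 * A (k+1) * R ^ (k+1)
        = (((k:ℝ) + 2) ^ 2 * (((k:ℝ) + a) * R)) * (A k * R ^ k)
            / (2 * ((k:ℝ) + 1) * ((k:ℝ) + b)) := by
      rw [hA1 k, pow_succ]
      push_cast
      have h1 : ((k:ℝ) + 1) ≠ 0 := by positivity
      have h2 : ((k:ℝ) + b) ≠ 0 := by positivity
      field_simp
      ring
    have e2 : 1/2 * (((k:ℝ) + 1) ^ 2 * A k * R ^ k)
        = (((k:ℝ) + 1) ^ 3 * ((k:ℝ) + b)) * (A k * R ^ k)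
            / (2 * ((k:ℝ) + 1) * ((k:ℝ) + b)) := by
      have h1 : ((k:ℝ) + 1) ≠ 0 := by positivity
      have h2 : ((k:ℝ) + b) ≠ 0 := by positivity
      field_simp
    rw [e1, e2]
    rw [div_le_div_iff_of_pos_right (by positivity)]
    exact mul_le_mul_of_nonneg_right base hpos.le
  -- domination principle
  have dom : ∀ g G : ℕ → ℝ, Summable G → (∀ k, |g k| ≤ G k) → Summable g := fun g G hG hle =>
    summable_abs_iff.mp (Summable.of_nonneg_of_le (fun k => abs_nonneg _) hle hG)
  have masterS : Summable (fun k : ℕ => ((↑(k+1):ℝ) + 1) ^ 2 * A (k+1) * R ^ (k+1)) :=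
    (summable_nat_add_iff 1).mpr master
  -- bound on the derivative terms
  have hf'bd : ∀ (k : ℕ) (y : ℝ), |y| ≤ R →
      |((k:ℝ) - a) * A k * ((k:ℝ) * y ^ (k - 1))| ≤ (1 + a) * (((k:ℝ) + 1) ^ 2 * A k * R ^ k) := by
    intro k y hy
    have hk0 : (0:ℝ) ≤ (k:ℝ) := Nat.cast_nonneg k
    have h1 : |(k:ℝ) - a| ≤ (1 + a) * ((k:ℝ) + 1) := by
      rw [abs_le]; constructor <;> nlinarith
    have h2 : |y| ^ (k - 1) ≤ R ^ k := by
      calc |y| ^ (k - 1) ≤ R ^ (k - 1) := by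
            apply pow_le_pow_left₀ (abs_nonneg y) hy
        _ ≤ R ^ k := pow_le_pow_right₀ hR1 (Nat.sub_le k 1)
    have e : |((k:ℝ) - a) * A k * ((k:ℝ) * y ^ (k - 1))|
        = |(k:ℝ) - a| * A k * ((k:ℝ) * |y| ^ (k - 1)) := by
      rw [abs_mul, abs_mul, abs_mul, abs_of_nonneg (hApos k).le, Nat.abs_cast, abs_pow]
    rw [e]
    have step : |(k:ℝ) - a| * A k * ((k:ℝ) * |y| ^ (k - 1))
        ≤ ((1 + a) * ((k:ℝ) + 1)) * A k * (((k:ℝ) + 1) * R ^ k) := by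
      apply mul_le_mul
      · exact mul_le_mul h1 le_rfl (hApos k).le (by positivity)
      · exact mul_le_mul (by linarith) h2 (by positivity) (by positivity)
      · positivity
      · exact mul_nonneg (by positivity) (hApos k).le
    calc |(k:ℝ) - a| * A k * ((k:ℝ) * |y| ^ (k - 1))
        ≤ ((1 + a) * ((k:ℝ) + 1)) * A k * (((k:ℝ) + 1) * R ^ k) := step
      _ = (1 + a) * (((k:ℝ) + 1) ^ 2 * A k * R ^ k) := by ring
  -- summability of the basic series
  have Sf : ∀ x : ℝ, |x| ≤ R → Summable (fun k : ℕ => ((k:ℝ) - a) * A k * x ^ k) := by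
    intro x hx
    apply dom _ (fun k => (1 + a) * (((k:ℝ) + 1) ^ 2 * A k * R ^ k)) (master.mul_left _)
    intro k
    have hk0 : (0:ℝ) ≤ (k:ℝ) := Nat.cast_nonneg k
    have h1 : |(k:ℝ) - a| ≤ (1 + a) * ((k:ℝ) + 1) := by
      rw [abs_le]; constructor <;> nlinarith
    have h2 : |x| ^ k ≤ R ^ k := pow_le_pow_left₀ (abs_nonneg x) hx k
    have e : |((k:ℝ) - a) * A k * x ^ k| = |(k:ℝ) - a| * A k * |x| ^ k := by
      rw [abs_mul, abs_mul, abs_of_nonneg (hApos k).le, abs_pow]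
    rw [e]
    have step : |(k:ℝ) - a| * A k * |x| ^ k ≤ ((1 + a) * ((k:ℝ) + 1)) * A k * R ^ k := by
      apply mul_le_mul (mul_le_mul h1 le_rfl (hApos k).le (by positivity)) h2 (by positivity)
        (mul_nonneg (by positivity) (hApos k).le)
    have last : ((1 + a) * ((k:ℝ) + 1)) * A k * R ^ k
        ≤ (1 + a) * (((k:ℝ) + 1) ^ 2 * A k * R ^ k) := by
      have hARk : (0:ℝ) ≤ (1 + a) * ((k:ℝ) + 1) * (k:ℝ) * (A k * R ^ k) := by
        have := (hApos k).le
        positivity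
      nlinarith [hARk]
    linarith
  have Sf' : ∀ x : ℝ, |x| ≤ R →
      Summable (fun k : ℕ => ((k:ℝ) - a) * A k * ((k:ℝ) * x ^ (k - 1))) := by
    intro x hx
    exact dom _ (fun k => (1 + a) * (((k:ℝ) + 1) ^ 2 * A k * R ^ k)) (master.mul_left _)
      (fun k => hf'bd k x hx)
  have SW : ∀ x : ℝ, 0 ≤ x → x ≤ R → Summable (fun k : ℕ => ((k:ℝ) + 1) * A (k+1) * x ^ k) := by
    intro x hx0 hxR
    apply dom _ _ masterS
    intro k
    have e : |((k:ℝ) + 1) * A (k+1) * x ^ k| = ((k:ℝ) + 1) * A (k+1) * x ^ k := by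
      rw [abs_of_nonneg]
      have := (hApos (k+1)).le
      positivity
    rw [e]
    have h2 : x ^ k ≤ R ^ (k+1) :=
      le_trans (pow_le_pow_left₀ hx0 hxR k) (pow_le_pow_right₀ hR1 (Nat.le_succ k))
    have h1 : ((k:ℝ) + 1) ≤ ((↑(k+1):ℝ) + 1) ^ 2 := by
      push_cast
      nlinarith [(Nat.cast_nonneg k : (0:ℝ) ≤ (k:ℝ))]
    exact mul_le_mul (mul_le_mul h1 le_rfl (hApos (k+1)).le (by positivity)) h2
      (by positivity) (mul_nonneg (by positivity) (hApos (k+1)).le)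
  have SV : ∀ x : ℝ, |x| ≤ R → Summable (fun k : ℕ => (k:ℝ) * A k * x ^ k) := by
    intro x hx
    apply dom _ (fun k => ((k:ℝ) + 1) ^ 2 * A k * R ^ k) master
    intro k
    have e : |(k:ℝ) * A k * x ^ k| = (k:ℝ) * A k * |x| ^ k := by
      rw [abs_mul, abs_mul, abs_of_nonneg (hApos k).le, Nat.abs_cast, abs_pow]
    rw [e]
    have h2 : |x| ^ k ≤ R ^ k := pow_le_pow_left₀ (abs_nonneg x) hx k
    have h1 : (k:ℝ) ≤ ((k:ℝ) + 1) ^ 2 := by nlinarith [(Nat.cast_nonneg k : (0:ℝ) ≤ (k:ℝ))]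
    exact mul_le_mul (mul_le_mul h1 le_rfl (hApos k).le (by positivity)) h2 (by positivity)
      (mul_nonneg (by positivity) (hApos k).le)
  -- derivative of the power series ψ
  have hmem : ∀ x : ℝ, 0 ≤ x → x ≤ z₁ → x ∈ Set.Ioo (-1 : ℝ) R := by
    intro x h0 h1
    exact ⟨by linarith, by linarith [hRdef]⟩
  have habsR : ∀ y : ℝ, y ∈ Set.Ioo (-1 : ℝ) R → |y| ≤ R := by
    intro y hy
    rw [abs_le]
    exact ⟨by linarith [hy.1], hy.2.le⟩
  have hψderiv : ∀ y ∈ Set.Ioo (-1 : ℝ) R,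
      HasDerivAt (fun x : ℝ => ∑' k : ℕ, ((k:ℝ) - a) * A k * x ^ k)
        (∑' k : ℕ, ((k:ℝ) - a) * A k * ((k:ℝ) * y ^ (k - 1))) y := by
    intro y hy
    refine hasDerivAt_tsum_of_isPreconnected (F := ℝ)
      (g := fun (k : ℕ) (x : ℝ) => ((k:ℝ) - a) * A k * x ^ k)
      (g' := fun (k : ℕ) (y : ℝ) => ((k:ℝ) - a) * A k * ((k:ℝ) * y ^ (k - 1)))
      (u := fun k : ℕ => (1 + a) * (((k:ℝ) + 1) ^ 2 * A k * R ^ k))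
      (master.mul_left _) isOpen_Ioo isPreconnected_Ioo ?_ ?_
      (show (0:ℝ) ∈ Set.Ioo (-1 : ℝ) R by constructor <;> linarith) ?_ hy
    · intro k x hx
      have := (hasDerivAt_pow k x).const_mul (((k:ℝ) - a) * A k)
      simpa [mul_assoc] using this
    · intro k x hx
      rw [Real.norm_eq_abs]
      exact hf'bd k x (habsR x hx)
    · apply summable_of_ne_finset_zero (s := {0})
      intro k hk
      simp only [Finset.mem_singleton] at hk
      simp [zero_pow hk]
  -- the key differential inequality
  have key : ∀ x : ℝ, 0 ≤ x → x ≤ z₁ →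
      (∑' k : ℕ, ((k:ℝ) - a) * A k * x ^ k)
        + 2 * (∑' k : ℕ, ((k:ℝ) - a) * A k * ((k:ℝ) * x ^ (k - 1))) ≤ 0 := by
    intro x hx0 hxz
    have hxR : |x| ≤ R := by rw [abs_of_nonneg hx0]; linarith [hRdef]
    have sf := Sf x hxR
    have sf' := Sf' x hxR
    have sw := SW x hx0 (by linarith [hRdef])
    have sv := SV x hxR
    have sshift : Summable (fun k : ℕ =>
        ((↑(k+1):ℝ) - a) * A (k+1) * ((↑(k+1):ℝ) * x ^ ((k+1) - 1))) :=
      (summable_nat_add_iff 1).mpr sf'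
    have sshift' : Summable (fun k : ℕ =>
        ((↑(k+1):ℝ) - a) * A (k+1) * ((↑(k+1):ℝ) * x ^ k)) := by
      simpa using sshift
    have e1 : (∑' k : ℕ, ((k:ℝ) - a) * A k * ((k:ℝ) * x ^ (k - 1)))
        = ∑' k : ℕ, ((↑(k+1):ℝ) - a) * A (k+1) * ((↑(k+1):ℝ) * x ^ k) := by
      rw [Summable.tsum_eq_zero_add sf']
      simp
    have e2 : (∑' k : ℕ, (k:ℝ) * A k * x ^ k)
        = x * ∑' k : ℕ, ((k:ℝ) + 1) * A (k+1) * x ^ k := by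
      rw [Summable.tsum_eq_zero_add sv, ← tsum_mul_left]
      simp only [Nat.cast_zero, zero_mul, pow_zero, mul_one, zero_add]
      apply tsum_congr
      intro k
      push_cast
      ring
    have comb : (∑' k : ℕ, ((k:ℝ) - a) * A k * x ^ k)
          + 2 * (∑' k : ℕ, ((k:ℝ) - a) * A k * ((k:ℝ) * x ^ (k - 1)))
        = 2 * (x - z₁) * ∑' k : ℕ, ((k:ℝ) + 1) * A (k+1) * x ^ k := by
      rw [e1, ← tsum_mul_left]
      rw [← Summable.tsum_add sf (sshift'.mul_left 2)]
      have rhs : 2 * (x - z₁) * (∑' k : ℕ, ((k:ℝ) + 1) * A (k+1) * x ^ k)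
          = (2 * ∑' k : ℕ, (k:ℝ) * A k * x ^ k)
            - 2 * z₁ * ∑' k : ℕ, ((k:ℝ) + 1) * A (k+1) * x ^ k := by
        rw [e2]; ring
      rw [rhs, ← tsum_mul_left, ← tsum_mul_left, ← Summable.tsum_sub (sv.mul_left 2) (sw.mul_left (2 * z₁))]
      apply tsum_congr
      intro k
      push_cast
      linear_combination x ^ k * hrec k + 2 * ((k:ℝ) + 1) * A (k + 1) * x ^ k * hz₁def
    rw [comb]
    have hW : (0:ℝ) ≤ ∑' k : ℕ, ((k:ℝ) + 1) * A (k+1) * x ^ k := by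
      apply tsum_nonneg
      intro k
      have := (hApos (k+1)).le
      positivity
    nlinarith [hW]
  -- h(x) = exp(x/2) * ψ(x) is antitone on [0, z₁]
  have hIccIoo : Set.Icc (0:ℝ) z₁ ⊆ Set.Ioo (-1 : ℝ) R := fun x hx => hmem x hx.1 hx.2
  have hd : ∀ y ∈ Set.Ioo (-1 : ℝ) R,
      HasDerivAt (fun x : ℝ => Real.exp (x/2) * ∑' k : ℕ, ((k:ℝ) - a) * A k * x ^ k)
        (Real.exp (y/2) * (1/2) * (∑' k : ℕ, ((k:ℝ) - a) * A k * y ^ k)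
          + Real.exp (y/2) * ∑' k : ℕ, ((k:ℝ) - a) * A k * ((k:ℝ) * y ^ (k - 1))) y := by
    intro y hy
    have hexp : HasDerivAt (fun x : ℝ => Real.exp (x/2)) (Real.exp (y/2) * (1/2)) y := by
      have h1 : HasDerivAt (fun x : ℝ => x / 2) (1/2 : ℝ) y := (hasDerivAt_id y).div_const 2
      simpa using h1.exp
    exact hexp.mul (hψderiv y hy)
  have hanti : AntitoneOn (fun x : ℝ => Real.exp (x/2) * ∑' k : ℕ, ((k:ℝ) - a) * A k * x ^ k)
      (Set.Icc (0:ℝ) z₁) := by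
    apply antitoneOn_of_deriv_nonpos (convex_Icc _ _)
    · intro x hx
      exact (hd x (hIccIoo hx)).continuousAt.continuousWithinAt
    · intro x hx
      rw [interior_Icc] at hx
      exact ((hd x (hIccIoo (Set.mem_Icc_of_Ioo hx))).differentiableAt).differentiableWithinAt
    · intro x hx
      rw [interior_Icc] at hx
      rw [(hd x (hIccIoo (Set.mem_Icc_of_Ioo hx))).deriv]
      have hk := key x hx.1.le hx.2.le
      nlinarith [Real.exp_pos (x/2), hk]
  have h0mem : (0:ℝ) ∈ Set.Icc (0:ℝ) z₁ := ⟨le_rfl, hz₁.le⟩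
  have hz₁mem : z₁ ∈ Set.Icc (0:ℝ) z₁ := ⟨hz₁.le, le_rfl⟩
  have hle := hanti h0mem hz₁mem hz₁.le
  have hψ0 : (∑' k : ℕ, ((k:ℝ) - a) * A k * (0:ℝ) ^ k) = -a * A 0 := by
    rw [tsum_eq_single 0 (fun k hk => by simp [zero_pow hk])]
    simp
  have hle2 : Real.exp (z₁/2) * (∑' k : ℕ, ((k:ℝ) - a) * A k * z₁ ^ k) ≤ -a * A 0 := by
    simpa [hψ0] using hle
  have hψz₁ : (∑' k : ℕ, ((k:ℝ) - a) * A k * z₁ ^ k) < 0 := by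
    nlinarith [Real.exp_pos (z₁/2), hApos 0, hle2]
  calc (∑' k : ℕ, (2 * (k:ℝ) - 2 * a) * A k * z₁ ^ k)
      = ∑' k : ℕ, 2 * (((k:ℝ) - a) * A k * z₁ ^ k) := by
        apply tsum_congr; intro k; ring
    _ = 2 * ∑' k : ℕ, ((k:ℝ) - a) * A k * z₁ ^ k := tsum_mul_left
    _ < 0 := by linarith

/-- For `α > 0`, `n > 0` with `α + n > 2`, one has `F((α + n − 2)/2) < 0`, where
`F(z) = Σ (2k − n)·A_k·z^k`. -/
theorem stmt_14 (α n : ℝ) (hα : 0 < α) (hn : 0 < n) (hαn : 2 < α + n) (A : ℕ → ℝ)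
    (hA : ∀ k : ℕ,
      A k = Real.Gamma (α / 2) / Real.Gamma (n / 2) *
        (Real.Gamma ((k : ℝ) + n / 2) /
          (Real.Gamma ((k : ℝ) + α / 2) * 2 ^ k * (Nat.factorial k : ℝ))))
    (F : ℝ → ℝ) (hF : ∀ z : ℝ, F z = ∑' k : ℕ, (2 * (k : ℝ) - n) * A k * z ^ k) :
    F ((α + n - 2) / 2) < 0 := by
  have hApos : ∀ k, 0 < A k := by
    intro k
    rw [hA k]
    have h1 := Real.Gamma_pos_of_pos (by linarith : (0:ℝ) < α/2)
    have h2 := Real.Gamma_pos_of_pos (by linarith : (0:ℝ) < n/2)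
    have h3 := Real.Gamma_pos_of_pos (by positivity : (0:ℝ) < (k:ℝ) + n/2)
    have h4 := Real.Gamma_pos_of_pos (by positivity : (0:ℝ) < (k:ℝ) + α/2)
    have h5 : (0:ℝ) < (Nat.factorial k : ℝ) := by exact_mod_cast Nat.factorial_pos k
    positivity
  have hrec : ∀ k : ℕ, 2 * ((k : ℝ) + 1) * ((k : ℝ) + α/2) * A (k + 1)
      = ((k : ℝ) + n/2) * A k := by
    intro k
    have hkn : (0:ℝ) < (k:ℝ) + n/2 := by positivity
    have hkα : (0:ℝ) < (k:ℝ) + α/2 := by positivity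
    have g1 : Real.Gamma ((↑(k+1) : ℝ) + n/2) = ((k:ℝ) + n/2) * Real.Gamma ((k:ℝ) + n/2) := by
      push_cast
      rw [show (k:ℝ) + 1 + n/2 = ((k:ℝ) + n/2) + 1 by ring, Real.Gamma_add_one hkn.ne']
    have g2 : Real.Gamma ((↑(k+1) : ℝ) + α/2) = ((k:ℝ) + α/2) * Real.Gamma ((k:ℝ) + α/2) := by
      push_cast
      rw [show (k:ℝ) + 1 + α/2 = ((k:ℝ) + α/2) + 1 by ring, Real.Gamma_add_one hkα.ne']
    have gf : ((k+1).factorial : ℝ) = ((k:ℝ) + 1) * (k.factorial : ℝ) := by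
      rw [Nat.factorial_succ]; push_cast; ring
    have h2 := (Real.Gamma_pos_of_pos (by linarith : (0:ℝ) < n/2)).ne'
    have h4 := (Real.Gamma_pos_of_pos hkα).ne'
    have h5 : (Nat.factorial k : ℝ) ≠ 0 := by
      exact_mod_cast (Nat.factorial_pos k).ne'
    have h6 : ((2:ℝ)) ^ k ≠ 0 := by positivity
    rw [hA k, hA (k+1), g1, g2, gf, pow_succ]
    field_simp
  have key := aux_neg (n/2) (α/2) (by linarith) (by linarith) (by linarith) A hApos hrec
  rw [hF]
  have e1 : ((α + n - 2)/2 : ℝ) = n/2 + α/2 - 1 := by ring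
  rw [e1]
  calc (∑' k : ℕ, (2 * (k:ℝ) - n) * A k * (n/2 + α/2 - 1) ^ k)
      = ∑' k : ℕ, (2 * (k:ℝ) - 2 * (n/2)) * A k * (n/2 + α/2 - 1) ^ k := by
        apply tsum_congr; intro k; ring_nf
    _ < 0 := key
end

section
/- Let α > 2 and n = α − 2. Then both G(y) = y^{−n/2} and H(y) = y^{−n/2} · (1/2)∫₀^y e^{s/2}·s^{n/2 − 1} ds are twice differentiable on (0,∞) and satisfy the ordinary differential equation 4y·u''(y) + 2(α − y)·u'(y) − n·u(y) = 0 for all y > 0. -/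
open Real

/-- For `α > 2` and `n = α − 2`, both `G(y) = y^{−n/2}` and
`H(y) = y^{−n/2}·(1/2)∫₀^y e^{s/2}·s^{n/2−1} ds` are twice differentiable on `(0,∞)` and
satisfy `4y·u''(y) + 2(α − y)·u'(y) − n·u(y) = 0` for all `y > 0`. -/
theorem stmt_15 (α n : ℝ) (hα : 2 < α) (hn : n = α - 2)
    (G H : ℝ → ℝ)
    (hG : ∀ y : ℝ, G y = y ^ (-(n / 2)))
    (hH : ∀ y : ℝ, H y =
      y ^ (-(n / 2)) * ((1 / 2) * ∫ s in (0:ℝ)..y, Real.exp (s / 2) * s ^ (n / 2 - 1))) :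
    ∀ y : ℝ, 0 < y →
      (DifferentiableAt ℝ G y ∧ DifferentiableAt ℝ (deriv G) y ∧
        4 * y * deriv (deriv G) y + 2 * (α - y) * deriv G y - n * G y = 0) ∧
      (DifferentiableAt ℝ H y ∧ DifferentiableAt ℝ (deriv H) y ∧
        4 * y * deriv (deriv H) y + 2 * (α - y) * deriv H y - n * H y = 0) := by
  intro y hy
  have hy0 : y ≠ 0 := hy.ne'
  have hn0 : (0 : ℝ) < n := by linarith
  have hα2 : α = n + 2 := by rw [hn]; ring
  -- the integrand
  set f : ℝ → ℝ := fun s => Real.exp (s / 2) * s ^ (n / 2 - 1) with hf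
  set F0 : ℝ → ℝ := fun t => (1 / 2) * ∫ s in (0:ℝ)..t, f s with hF0
  have hGfun : G = fun x : ℝ => x ^ (-(n / 2)) := funext hG
  have hHfun : H = fun x : ℝ => x ^ (-(n / 2)) * F0 x := funext hH
  -- basic derivatives of rpow
  have hgd : ∀ x : ℝ, x ≠ 0 →
      HasDerivAt (fun x : ℝ => x ^ (-(n / 2))) (-(n / 2) * x ^ (-(n / 2) - 1)) x := by
    intro x hx
    exact Real.hasDerivAt_rpow_const (Or.inl hx)
  -- continuity of f on (0,∞)
  have hfcont : ContinuousOn f (Set.Ioi (0:ℝ)) := by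
    apply ContinuousOn.mul
    · exact (Real.continuous_exp.comp (continuous_id.div_const 2)).continuousOn
    · intro x hx
      exact (Real.continuousAt_rpow_const x _ (Or.inl (ne_of_gt hx))).continuousWithinAt
  -- derivative of F0 at positive points
  have hF0d : ∀ x : ℝ, 0 < x → HasDerivAt F0 ((1 / 2) * f x) x := by
    intro x hx
    have hint : IntervalIntegrable f MeasureTheory.volume 0 x := by
      apply IntervalIntegrable.continuousOn_mul
        (intervalIntegral.intervalIntegrable_rpow' (by linarith))
      exact (Real.continuous_exp.comp (continuous_id.div_const 2)).continuousOn
    have hmeas : StronglyMeasurableAtFilter f (nhds x) MeasureTheory.volume :=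
      hfcont.stronglyMeasurableAtFilter isOpen_Ioi x hx
    have hc : ContinuousAt f x := by
      have := hfcont.continuousAt (IsOpen.mem_nhds isOpen_Ioi hx)
      exact this
    exact ((intervalIntegral.integral_hasDerivAt_right hint hmeas hc).const_mul (1/2))
  -- derivative of the exponential part
  have hψd : ∀ x : ℝ, 0 < x →
      HasDerivAt (fun x : ℝ => (1 / 2) * f x)
        ((1 / 2) * (Real.exp (x / 2) * (1 / 2) * x ^ (n / 2 - 1)
          + Real.exp (x / 2) * ((n / 2 - 1) * x ^ (n / 2 - 1 - 1)))) x := by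
    intro x hx
    have hexp : HasDerivAt (fun x : ℝ => Real.exp (x / 2)) (Real.exp (x / 2) * (1 / 2)) x :=
      HasDerivAt.exp ((hasDerivAt_id x).div_const 2)
    have hrp : HasDerivAt (fun x : ℝ => x ^ (n / 2 - 1)) ((n / 2 - 1) * x ^ (n / 2 - 1 - 1)) x :=
      Real.hasDerivAt_rpow_const (Or.inl hx.ne')
    have := (hexp.mul hrp).const_mul (1/2)
    exact this
  -- eventual positivity
  have hev : ∀ᶠ x in nhds y, 0 < x := eventually_gt_nhds hy
  -- rpow rewriting facts at y
  have hVpos : (0:ℝ) < y ^ (n / 2) := Real.rpow_pos_of_pos hy _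
  have e0 : y ^ (-(n / 2)) = (y ^ (n / 2))⁻¹ := Real.rpow_neg hy.le _
  have e1 : y ^ (-(n / 2) - 1) = (y ^ (n / 2))⁻¹ * y⁻¹ := by
    rw [show -(n/2) - 1 = -(n/2) + (-1) by ring, Real.rpow_add hy, e0, Real.rpow_neg_one]
  have e2 : y ^ (-(n / 2) - 1 - 1) = (y ^ (n / 2))⁻¹ * (y⁻¹ * y⁻¹) := by
    rw [show -(n/2) - 1 - 1 = (-(n/2) + (-1)) + (-1) by ring, Real.rpow_add hy,
      Real.rpow_add hy, e0, Real.rpow_neg_one]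
    ring
  have e3 : y ^ (n / 2 - 1) = y ^ (n / 2) * y⁻¹ := by
    rw [show n/2 - 1 = n/2 + (-1) by ring, Real.rpow_add hy, Real.rpow_neg_one]
  have e4 : y ^ (n / 2 - 1 - 1) = y ^ (n / 2) * (y⁻¹ * y⁻¹) := by
    rw [show n/2 - 1 - 1 = (n/2 + (-1)) + (-1) by ring, Real.rpow_add hy,
      Real.rpow_add hy, Real.rpow_neg_one]
    ring
  constructor
  · -- G part
    have hG1 : HasDerivAt G (-(n / 2) * y ^ (-(n / 2) - 1)) y := by
      rw [hGfun]; exact hgd y hy0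
    have hdGev : deriv G =ᶠ[nhds y] fun x => -(n / 2) * x ^ (-(n / 2) - 1) := by
      filter_upwards [hev] with x hx
      have : HasDerivAt G (-(n / 2) * x ^ (-(n / 2) - 1)) x := by
        rw [hGfun]; exact hgd x hx.ne'
      exact this.deriv
    have hG2 : HasDerivAt (fun x : ℝ => -(n / 2) * x ^ (-(n / 2) - 1))
        (-(n / 2) * ((-(n / 2) - 1) * y ^ (-(n / 2) - 1 - 1))) y :=
      (Real.hasDerivAt_rpow_const (Or.inl hy0)).const_mul _
    refine ⟨hG1.differentiableAt, hG2.differentiableAt.congr_of_eventuallyEq hdGev, ?_⟩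
    rw [hdGev.deriv_eq, hG2.deriv, hG1.deriv, hG y, e0, e1, e2, hα2]
    field_simp
    ring
  · -- H part
    have hH1 : ∀ x : ℝ, 0 < x → HasDerivAt H
        (-(n / 2) * x ^ (-(n / 2) - 1) * F0 x + x ^ (-(n / 2)) * ((1 / 2) * f x)) x := by
      intro x hx
      rw [hHfun]
      exact (hgd x hx.ne').mul (hF0d x hx)
    have hdHev : deriv H =ᶠ[nhds y] fun x =>
        -(n / 2) * x ^ (-(n / 2) - 1) * F0 x + x ^ (-(n / 2)) * ((1 / 2) * f x) := by
      filter_upwards [hev] with x hx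
      exact (hH1 x hx).deriv
    have hH2 : HasDerivAt (fun x : ℝ =>
        -(n / 2) * x ^ (-(n / 2) - 1) * F0 x + x ^ (-(n / 2)) * ((1 / 2) * f x))
        ((-(n / 2) * ((-(n / 2) - 1) * y ^ (-(n / 2) - 1 - 1))) * F0 y
          + (-(n / 2) * y ^ (-(n / 2) - 1)) * ((1 / 2) * f y)
          + ((-(n / 2) * y ^ (-(n / 2) - 1)) * ((1 / 2) * f y)
            + y ^ (-(n / 2)) * ((1 / 2) * (Real.exp (y / 2) * (1 / 2) * y ^ (n / 2 - 1)
              + Real.exp (y / 2) * ((n / 2 - 1) * y ^ (n / 2 - 1 - 1)))))) y := by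
      exact (((Real.hasDerivAt_rpow_const (Or.inl hy0)).const_mul
        (-(n/2))).mul (hF0d y hy)).add ((hgd y hy0).mul (hψd y hy))
    refine ⟨(hH1 y hy).differentiableAt,
      hH2.differentiableAt.congr_of_eventuallyEq hdHev, ?_⟩
    rw [hdHev.deriv_eq, hH2.deriv, (hH1 y hy).deriv]
    have hHy : H y = y ^ (-(n / 2)) * F0 y := hH y
    rw [hHy, hf]
    simp only []
    rw [e0, e1, e2, e3, e4, hα2]
    field_simp
    ring
end

section
/- Fix n > 0 and γ > 0, and define sequences (D_r)_{r≥0}, (B_r)_{r≥0} by D_0 = 1, B_0 = −1, D_{r+1} = (n+γ)·D_r + n·B_r, and B_{r+1} = (n+γ)·D_r + (n + 2r + 2 + 2γ)·B_r. Then for every r ≥ 0 one has D_r ≤ γ^r and B_r ≤ −γ^r·(1 + 2r/γ); moreover, for any r with r > γ²/(2n), it holds that D_{r+1} < 0 and B_{r+1} < 0. -/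
open Real

/-- For `n > 0`, `γ > 0` and the sequences `D₀ = 1`, `B₀ = −1`,
`D_{r+1} = (n+γ)·D_r + n·B_r`, `B_{r+1} = (n+γ)·D_r + (n+2r+2+2γ)·B_r`, one has
`D_r ≤ γ^r` and `B_r ≤ −γ^r·(1 + 2r/γ)` for every `r`; moreover, for any `r > γ²/(2n)`,
`D_{r+1} < 0` and `B_{r+1} < 0`. -/
theorem stmt_17 (n γ : ℝ) (hn : 0 < n) (hγ : 0 < γ)
    (D B : ℕ → ℝ) (hD0 : D 0 = 1) (hB0 : B 0 = -1)
    (hDrec : ∀ r : ℕ, D (r + 1) = (n + γ) * D r + n * B r)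
    (hBrec : ∀ r : ℕ, B (r + 1) = (n + γ) * D r + (n + 2 * (r : ℝ) + 2 + 2 * γ) * B r) :
    (∀ r : ℕ, D r ≤ γ ^ r ∧ B r ≤ -γ ^ r * (1 + 2 * (r : ℝ) / γ)) ∧
      ∀ r : ℕ, γ ^ 2 / (2 * n) < (r : ℝ) → D (r + 1) < 0 ∧ B (r + 1) < 0 := by
  -- division-free key invariant
  have key : ∀ r : ℕ, D r ≤ γ ^ r ∧ γ * B r ≤ -γ ^ (r + 1) - 2 * (r : ℝ) * γ ^ r := by
    intro r
    induction r with
    | zero => constructor <;> simp [hD0, hB0]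
    | succ r ih =>
      obtain ⟨hd, hb⟩ := ih
      have hp : (0:ℝ) < γ ^ r := pow_pos hγ r
      have hr0 : (0:ℝ) ≤ (r : ℝ) := Nat.cast_nonneg r
      have hc : (0:ℝ) ≤ n + 2 * (r : ℝ) + 2 + 2 * γ := by linarith
      constructor
      · rw [hDrec]
        rw [← mul_le_mul_iff_right₀ hγ]
        simp only [pow_succ] at hb ⊢
        nlinarith [mul_le_mul_of_nonneg_left hd (mul_nonneg hγ.le (by linarith) : (0:ℝ) ≤ γ * (n + γ)),
          mul_le_mul_of_nonneg_left hb hn.le,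
          mul_nonneg (mul_nonneg hn.le hr0) hp.le]
      · rw [hBrec]
        push_cast
        simp only [pow_succ] at hb ⊢
        nlinarith [mul_le_mul_of_nonneg_left hd (mul_nonneg hγ.le (by linarith) : (0:ℝ) ≤ γ * (n + γ)),
          mul_le_mul_of_nonneg_left hb hc,
          mul_nonneg hr0 (mul_nonneg hγ.le hp.le),
          mul_nonneg (mul_nonneg hr0 hn.le) hp.le,
          mul_nonneg (mul_nonneg hr0 hr0) hp.le]
  have keyB : ∀ r : ℕ, B r ≤ -γ ^ r * (1 + 2 * (r : ℝ) / γ) := by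
    intro r
    have hb := (key r).2
    rw [← mul_le_mul_iff_right₀ hγ]
    have : γ * (-γ ^ r * (1 + 2 * (r : ℝ) / γ)) = -γ ^ (r + 1) - 2 * (r : ℝ) * γ ^ r := by
      field_simp; ring
    rw [this]
    exact hb
  refine ⟨fun r => ⟨(key r).1, keyB r⟩, fun r hr => ?_⟩
  have hd := (key r).1
  have hb := (key r).2
  have hb1 := (key (r + 1)).2
  have hp : (0:ℝ) < γ ^ r := pow_pos hγ r
  have hr0 : (0:ℝ) ≤ (r : ℝ) := Nat.cast_nonneg r
  have h2n : γ ^ 2 < 2 * n * (r : ℝ) := by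
    rw [div_lt_iff₀ (by linarith : (0:ℝ) < 2 * n)] at hr
    linarith
  constructor
  · have hγD : γ * D (r + 1) < 0 := by
      rw [hDrec]
      simp only [pow_succ] at hb ⊢
      nlinarith [mul_le_mul_of_nonneg_left hd (mul_nonneg hγ.le (by linarith) : (0:ℝ) ≤ γ * (n + γ)),
        mul_le_mul_of_nonneg_left hb hn.le]
    nlinarith
  · have hγB : γ * B (r + 1) < 0 := by
      have : (0:ℝ) < γ ^ (r + 1 + 1) := pow_pos hγ _
      have h1 : (0:ℝ) ≤ 2 * ((r : ℝ) + 1) * γ ^ (r + 1) := by positivity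
      push_cast at hb1
      linarith
    nlinarith
end

section
/- Fix δ > 0 and α > 0. Define real sequences by d_0 = 1, b_0 = −1, d_{r+1} = δ·d_r + 2(1+δ)·b_r, b_{r+1} = δ·d_r + 2r·b_r, and D_0 = 1, B_0 = −1, D_{r+1} = (α+δ)·D_r + (α + 2 + 2δ)·B_r, B_{r+1} = (α+δ)·D_r + (2r + α)·B_r. Then for every r ≥ 0 one has D_r ≤ d_r and B_r ≤ b_r. -/
open Real

/-- For `δ > 0`, `α > 0`, with `d₀ = 1`, `b₀ = −1`, `d_{r+1} = δ·d_r + 2(1+δ)·b_r`,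
`b_{r+1} = δ·d_r + 2r·b_r`, and `D₀ = 1`, `B₀ = −1`,
`D_{r+1} = (α+δ)·D_r + (α+2+2δ)·B_r`, `B_{r+1} = (α+δ)·D_r + (2r+α)·B_r`,
one has `D_r ≤ d_r` and `B_r ≤ b_r` for every `r`. -/
theorem stmt_19 (δ α : ℝ) (hδ : 0 < δ) (hα : 0 < α)
    (d b D B : ℕ → ℝ) (hd0 : d 0 = 1) (hb0 : b 0 = -1)
    (hdrec : ∀ r : ℕ, d (r + 1) = δ * d r + 2 * (1 + δ) * b r)
    (hbrec : ∀ r : ℕ, b (r + 1) = δ * d r + 2 * (r : ℝ) * b r)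
    (hD0 : D 0 = 1) (hB0 : B 0 = -1)
    (hDrec : ∀ r : ℕ, D (r + 1) = (α + δ) * D r + (α + 2 + 2 * δ) * B r)
    (hBrec : ∀ r : ℕ, B (r + 1) = (α + δ) * D r + (2 * (r : ℝ) + α) * B r) :
    ∀ r : ℕ, D r ≤ d r ∧ B r ≤ b r := by
  have key : ∀ r : ℕ, (d r + b r ≤ 0) ∧
      (δ * (d r + b r) + ((r : ℝ) + 1) * b r ≤ 0) ∧
      (0 < b r → 2 * (r : ℝ) < δ + 2) ∧ D r ≤ d r ∧ B r ≤ b r := by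
    intro r
    induction r with
    | zero =>
      refine ⟨by rw [hd0, hb0]; norm_num,
        by rw [hd0, hb0]; push_cast; nlinarith,
        by intro h; rw [hb0] at h; norm_num at h,
        by rw [hD0, hd0], by rw [hB0, hb0]⟩
    | succ r ih =>
      obtain ⟨hs, hI, hpos, hD, hB⟩ := ih
      have hrn : (0:ℝ) ≤ (r : ℝ) := Nat.cast_nonneg r
      have hcast : ((r + 1 : ℕ) : ℝ) = (r : ℝ) + 1 := by push_cast; ring
      have hS : D r + B r ≤ 0 := by linarith
      -- part 1 : s' ≤ 0
      have p1 : d (r + 1) + b (r + 1) ≤ 0 := by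
        rw [hdrec r, hbrec r]; linarith
      -- part 2 : I' ≤ 0
      have p2 : δ * (d (r + 1) + b (r + 1)) + (((r + 1 : ℕ) : ℝ) + 1) * b (r + 1) ≤ 0 := by
        rw [hdrec r, hbrec r, hcast]
        rcases le_or_gt (b r) 0 with hb | hb
        · have h1 : 0 ≤ δ * ((r : ℝ) + 2 + 2 * δ) * (-(d r + b r)) :=
            mul_nonneg (by positivity) (by linarith)
          have h2 : 0 ≤ (r : ℝ) * (2 * (r : ℝ) + 4 + δ) * (-(b r)) :=
            mul_nonneg (by positivity) (by linarith)
          nlinarith [h1, h2]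
        · have hlt := hpos hb
          have hδ1 : (r : ℝ) ≤ δ + 1 := by linarith
          have h1 : 0 ≤ (r : ℝ) * (2 * (r : ℝ) + 4 + δ) := by positivity
          have h2 : (r : ℝ) * (2 * (r : ℝ) + 4 + δ) *
              (δ * (d r + b r) + ((r : ℝ) + 1) * b r) ≤ 0 :=
            mul_nonpos_of_nonneg_of_nonpos h1 hI
          have h3 : 0 ≤ δ * (-(d r + b r)) * ((r : ℝ) + 2) * (δ + 1 - (r : ℝ)) :=
            mul_nonneg (mul_nonneg (mul_nonneg hδ.le (by linarith)) (by linarith))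
              (by linarith)
          have hr1 : (0:ℝ) < (r : ℝ) + 1 := by linarith
          nlinarith [h2, h3, hr1]
      -- part 3 : positivity of b forces small r
      have p3 : 0 < b (r + 1) → 2 * ((r + 1 : ℕ) : ℝ) < δ + 2 := by
        intro hb'
        rw [hcast]
        by_contra hcon
        push_neg at hcon
        -- hcon : δ + 2 ≤ 2 * (r + 1), i.e. δ ≤ 2 r
        rw [hbrec r] at hb'
        rcases le_or_gt (b r) 0 with hbneg | hbpos
        · nlinarith [mul_nonneg hδ.le (neg_nonneg.2 hs),
            mul_nonneg (show (0:ℝ) ≤ 2 * (r : ℝ) - δ by linarith)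
              (neg_nonneg.2 hbneg)]
        · have hlt := hpos hbpos
          have hr0 : (1:ℝ) ≤ (r : ℝ) := by
            have : r ≠ 0 := by
              rintro rfl
              simp only [Nat.cast_zero] at hcon
              linarith
            exact_mod_cast Nat.one_le_iff_ne_zero.2 this
          have hint : 0 ≤ (δ + 1 - (r : ℝ)) * b r :=
            mul_nonneg (by linarith) hbpos.le
          nlinarith [hint, hI]
      -- part 4 : D ≤ d
      have h4a : 0 ≤ δ * (d r - D r) := mul_nonneg hδ.le (by linarith)
      have h4b : 0 ≤ (2 * (1 + δ)) * (b r - B r) :=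
        mul_nonneg (by linarith) (by linarith)
      have h4c : 0 ≤ α * (-(D r + B r)) := mul_nonneg hα.le (by linarith)
      have p4 : D (r + 1) ≤ d (r + 1) := by
        rw [hDrec r, hdrec r]; nlinarith [h4a, h4b, h4c]
      have h5b : 0 ≤ 2 * (r : ℝ) * (b r - B r) :=
        mul_nonneg (by positivity) (by linarith)
      have p5 : B (r + 1) ≤ b (r + 1) := by
        rw [hBrec r, hbrec r]; nlinarith [h4a, h5b, h4c]
      exact ⟨p1, p2, p3, p4, p5⟩
  exact fun r => ⟨(key r).2.2.2.1, (key r).2.2.2.2⟩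
end
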